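/- arXiv:2503.12860 — 5 statements merged into one kernel-verified Lean document; each statement's English description precedes it below -/
import Mathlib

section
/- Let G be a finite simple graph, let u ≠ v be vertices of G, and let P be a longest (u,v)-path in G with vertex sequence p₀ = u, p₁, …, p_m = v. Let H be a connected component of G − V(P). Then the set A = {p_{i+1} : 0 ≤ i < m and p_i has a neighbor in H} is an independent set in G. -/
open SimpleGraph List

namespace StmtTwoAux

variable {V : Type*} {G : SimpleGraph V}

lemma getVert_mem_support {u v : V} (w : G.Walk u v) (i : ℕ) :
    w.getVert i ∈ w.support := by
  induction w generalizing i with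
  | nil => simp [SimpleGraph.Walk.getVert]
  | cons h q ih =>
    cases i with
    | zero => simp [SimpleGraph.Walk.getVert]
    | succ n =>
      rw [SimpleGraph.Walk.getVert_cons_succ, SimpleGraph.Walk.support_cons]
      exact List.mem_cons_of_mem _ (ih n)

lemma getVert_inj {u v : V} (w : G.Walk u v) :
    w.IsPath → ∀ i j, i ≤ w.length → j ≤ w.length →
      w.getVert i = w.getVert j → i = j := by
  induction w with
  | nil => intro _ i j hi hj _; simp only [SimpleGraph.Walk.length_nil, Nat.le_zero] at hi hj; omega
  | cons h q ih =>
    intro hw i j hi hj hij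
    rw [SimpleGraph.Walk.cons_isPath_iff] at hw
    match i, j with
    | 0, 0 => rfl
    | 0, j+1 =>
      exfalso
      rw [SimpleGraph.Walk.getVert_zero, SimpleGraph.Walk.getVert_cons_succ] at hij
      exact hw.2 (by rw [hij]; exact getVert_mem_support q j)
    | i+1, 0 =>
      exfalso
      rw [SimpleGraph.Walk.getVert_zero, SimpleGraph.Walk.getVert_cons_succ] at hij
      exact hw.2 (by rw [← hij]; exact getVert_mem_support q i)
    | i+1, j+1 =>
      rw [SimpleGraph.Walk.getVert_cons_succ, SimpleGraph.Walk.getVert_cons_succ] at hij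
      simp only [SimpleGraph.Walk.length_cons, Nat.add_le_add_iff_right] at hi hj
      exact congrArg Nat.succ (ih hw.1 i j hi hj hij)

lemma exists_segment {u v : V} (w : G.Walk u v) (i : ℕ) :
    ∀ j, i ≤ j → j ≤ w.length →
      ∃ W : G.Walk (w.getVert i) (w.getVert j),
        W.support = (List.Ico i (j+1)).map w.getVert := by
  intro j hij
  induction j, hij using Nat.le_induction with
  | base =>
    intro _
    exact ⟨SimpleGraph.Walk.nil, by simp [List.Ico.succ_singleton]⟩
  | succ n hn ihn =>
    intro hlen
    obtain ⟨W, hW⟩ := ihn (by omega)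
    refine ⟨W.concat (w.adj_getVert_succ (by omega)), ?_⟩
    rw [SimpleGraph.Walk.support_concat, hW,
      List.Ico.succ_top (by omega : i ≤ n + 1), List.map_append, List.map_singleton]

lemma key [DecidableEq V] {u v : V} (P : G.Walk u v) (hP : P.IsPath)
    (hlong : ∀ Q : G.Walk u v, Q.IsPath → Q.length ≤ P.length)
    (C : (G.induce {w : V | w ∉ P.support}).ConnectedComponent)
    {i j : ℕ} (hij : i < j) (hjm : j < P.length)
    {x y : {w : V | w ∉ P.support}} (hx : x ∈ C.supp) (hy : y ∈ C.supp)
    (hxi : G.Adj (P.getVert i) (↑x : V)) (hyj : G.Adj (P.getVert j) (↑y : V)) :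
    ¬ G.Adj (P.getVert (i+1)) (P.getVert (j+1)) := by
  intro hadj
  set m := P.length with hm
  -- walk inside the component from x to y
  rw [SimpleGraph.ConnectedComponent.mem_supp_iff] at hx hy
  obtain ⟨w0⟩ := SimpleGraph.ConnectedComponent.exact (hx.trans hy.symm)
  set WH' := w0.bypass with hWH'
  have hWH'path : WH'.IsPath := w0.bypass_isPath
  set emb : G.induce {w : V | w ∉ P.support} ↪g G := SimpleGraph.Embedding.induce _ with hemb
  set WH : G.Walk (↑x : V) (↑y : V) := WH'.map emb.toHom with hWH
  have hWHpath : WH.IsPath :=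
    SimpleGraph.Walk.map_isPath_of_injective Subtype.val_injective hWH'path
  have hWHsup : ∀ z ∈ WH.support, z ∉ P.support := by
    intro z hz
    replace hz : z ∈ WH'.support.map emb.toHom := by rw [← SimpleGraph.Walk.support_map]; exact hz
    obtain ⟨z', _, rfl⟩ := List.mem_map.mp hz
    exact z'.2
  -- path segments
  obtain ⟨W1, hW1⟩ := exists_segment P 0 i (Nat.zero_le _) (by omega)
  obtain ⟨W2, hW2⟩ := exists_segment P (i+1) j (by omega) (by omega)
  obtain ⟨W3, hW3⟩ := exists_segment P (j+1) m (by omega) (by omega)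
  -- the new longer walk
  set Q : G.Walk u v :=
    (W1.copy P.getVert_zero rfl).append
      (SimpleGraph.Walk.cons hxi
        (WH.append
          (SimpleGraph.Walk.cons hyj.symm
            (W2.reverse.append
              (SimpleGraph.Walk.cons hadj (W3.copy rfl P.getVert_length)))))) with hQ
  have hQsup : Q.support =
      ((List.Ico 0 (i+1)).map P.getVert ++ (WH.support ++
        (((List.Ico (i+1) (j+1)).map P.getVert).reverse ++
          (List.Ico (j+1) (m+1)).map P.getVert))) := by
    rw [hQ]
    simp only [SimpleGraph.Walk.support_append, SimpleGraph.Walk.support_cons,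
      SimpleGraph.Walk.support_copy, SimpleGraph.Walk.support_reverse, List.tail_cons,
      hW1, hW2, hW3]
  have hinj : ∀ a ∈ List.Ico 0 (m+1), ∀ b ∈ List.Ico 0 (m+1),
      P.getVert a = P.getVert b → a = b := by
    intro a ha b hb hab
    rw [List.Ico.mem] at ha hb
    exact getVert_inj P hP a b (by omega) (by omega) hab
  have hwhole : (((List.Ico 0 (i+1)).map P.getVert ++ ((List.Ico (i+1) (j+1)).map P.getVert ++
      (List.Ico (j+1) (m+1)).map P.getVert))).Nodup := by
    rw [← List.map_append, ← List.map_append,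
      List.Ico.append_consecutive (by omega) (by omega),
      List.Ico.append_consecutive (by omega) (by omega)]
    exact (List.Ico.nodup 0 (m+1)).map_on hinj
  have hQnodup : Q.support.Nodup := by
    rw [hQsup]
    rw [List.nodup_append', List.nodup_append', List.nodup_append', List.nodup_reverse]
    rw [List.nodup_append', List.nodup_append'] at hwhole
    have hmemP : ∀ k : ℕ, P.getVert k ∈ P.support := fun k => getVert_mem_support P k
    have hdisjH : ∀ (L : List ℕ), List.Disjoint (L.map P.getVert) WH.support := by
      intro L z hz hz2
      obtain ⟨k, _, rfl⟩ := List.mem_map.mp hz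
      exact hWHsup _ hz2 (hmemP k)
    refine ⟨hwhole.1, ⟨(hWHpath.2 : WH.support.Nodup), ⟨hwhole.2.1.1, hwhole.2.1.2.1, ?_⟩, ?_⟩, ?_⟩
    · -- Disjoint L2.reverse L3 ; from hwhole
      intro z hz
      exact hwhole.2.1.2.2 (List.mem_reverse.mp hz)
    · -- Disjoint WH.support (L2.reverse ++ L3)
      intro z hz hz2
      rcases List.mem_append.mp hz2 with h2 | h3
      · exact hdisjH _ (List.mem_reverse.mp h2) hz
      · exact hdisjH _ h3 hz
    · -- Disjoint L1 (WH ++ (L2.rev ++ L3))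
      intro z hz hz2
      rcases List.mem_append.mp hz2 with hH | h23
      · exact hdisjH _ hz hH
      · rcases List.mem_append.mp h23 with h2 | h3
        · exact hwhole.2.2 hz (List.mem_append_left _ (List.mem_reverse.mp h2))
        · exact hwhole.2.2 hz (List.mem_append_right _ h3)
  have hQpath : Q.IsPath := (SimpleGraph.Walk.isPath_def Q).mpr hQnodup
  have hlen := hlong Q hQpath
  have h1 : Q.support.length = Q.length + 1 := Q.length_support
  have h2 : 1 ≤ WH.support.length := by
    have := WH.length_support; omega
  rw [hQsup] at h1
  simp only [List.length_append, List.length_map, List.length_reverse, List.Ico.length] at h1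
  omega


end StmtTwoAux

/-- If P is a longest (u,v)-path and H is a component of G − V(P),
then the set of successors on P of vertices having a neighbour in H is independent. -/
theorem stmt_2 {V : Type*} [Fintype V] [DecidableEq V] (G : SimpleGraph V)
    (u v : V) (huv : u ≠ v) (P : G.Walk u v) (hP : P.IsPath)
    (hlong : ∀ Q : G.Walk u v, Q.IsPath → Q.length ≤ P.length)
    (m : ℕ) (hm : m = P.length)
    (p : ℕ → V) (hp : ∀ i, p i = P.getVert i)
    (C : (G.induce {w : V | w ∉ P.support}).ConnectedComponent)
    (A : Set V)
    (hA : A = {w | ∃ i < m, w = p (i + 1) ∧ ∃ h ∈ C.supp, G.Adj (p i) (↑h : V)}) :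
    ∀ a ∈ A, ∀ b ∈ A, ¬ G.Adj a b := by
  subst hA
  rintro a ⟨i, hi, rfl, x, hx, hxi⟩ b ⟨j, hj, rfl, y, hy, hyj⟩ hadj
  simp only [hp] at hxi hyj hadj
  rcases lt_trichotomy i j with h | h | h
  · exact StmtTwoAux.key P hP hlong C h (by omega) hx hy hxi hyj hadj
  · subst h
    exact G.irrefl hadj
  · exact StmtTwoAux.key P hP hlong C h (by omega) hy hx hyj hxi hadj.symm
end

section
/- Let G be a finite simple graph, let u ≠ v be vertices of G, and let P be a longest (u,v)-path in G with vertex sequence p₀ = u, p₁, …, p_m = v. Let H be a connected component of G − V(P). Then for every index i with 0 ≤ i < m, the vertices p_i and p_{i+1} do not both have a neighbor in H. -/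
lemma stmt_3_aux {V : Type*} (G : SimpleGraph V) :
    ∀ {u v : V} (P : G.Walk u v), P.IsPath → ∀ i, i < P.length →
    ∀ {h1 h2 : V} (W : G.Walk h1 h2), W.IsPath →
    G.Adj (P.getVert i) h1 → G.Adj (P.getVert (i+1)) h2 →
    (∀ x ∈ W.support, x ∉ P.support) →
    ∃ Q : G.Walk u v, Q.IsPath ∧ Q.length = P.length + W.length + 1 ∧
      ∀ x ∈ Q.support, x ∈ P.support ∨ x ∈ W.support := by
  intro u v P
  induction P with
  | nil => intro _ i hi; simp at hi
  | @cons u w v hadj P' ih =>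
    intro hP i hi h1 h2 W hW ha hb hdisj
    have huP' : u ∉ P'.support := (SimpleGraph.Walk.cons_isPath_iff hadj P').mp hP |>.2
    have hP' : P'.IsPath := (SimpleGraph.Walk.cons_isPath_iff hadj P').mp hP |>.1
    cases i with
    | zero =>
      simp only [SimpleGraph.Walk.getVert_zero, SimpleGraph.Walk.getVert_cons_succ,
        SimpleGraph.Walk.getVert_zero] at ha hb
      refine ⟨SimpleGraph.Walk.cons ha (W.append (SimpleGraph.Walk.cons hb.symm P')),
        ?_, ?_, ?_⟩
      · rw [SimpleGraph.Walk.isPath_def]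
        simp only [SimpleGraph.Walk.support_cons, SimpleGraph.Walk.support_append,
          List.tail_cons]
        rw [List.nodup_cons, List.nodup_append]
        refine ⟨?_, hW.support_nodup, hP'.support_nodup, ?_⟩
        · intro hu
          rcases List.mem_append.mp hu with h | h
          · exact hdisj u h (SimpleGraph.Walk.start_mem_support _)
          · exact huP' h
        · intro x hx y hy hxy
          subst hxy
          exact hdisj x hx (by simp [SimpleGraph.Walk.support_cons, hy])
      · simp [SimpleGraph.Walk.length_append]; omega
      · intro x hx
        simp only [SimpleGraph.Walk.support_cons, SimpleGraph.Walk.support_append,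
          List.tail_cons, List.mem_cons, List.mem_append] at hx
        rcases hx with rfl | hx | hx
        · left; exact SimpleGraph.Walk.start_mem_support _
        · right; exact hx
        · left; simp [SimpleGraph.Walk.support_cons, hx]
    | succ j =>
      simp only [SimpleGraph.Walk.getVert_cons_succ] at ha hb
      have hj : j < P'.length := by
        simpa [SimpleGraph.Walk.length_cons] using hi
      have hdisj' : ∀ x ∈ W.support, x ∉ P'.support := by
        intro x hx hx'
        exact hdisj x hx (by simp [SimpleGraph.Walk.support_cons, hx'])
      obtain ⟨Q', hQ'path, hQ'len, hQ'sub⟩ := ih hP' j hj W hW ha hb hdisj'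
      refine ⟨SimpleGraph.Walk.cons hadj Q', ?_, ?_, ?_⟩
      · rw [SimpleGraph.Walk.cons_isPath_iff]
        refine ⟨hQ'path, fun hu => ?_⟩
        rcases hQ'sub u hu with h | h
        · exact huP' h
        · exact hdisj u h (SimpleGraph.Walk.start_mem_support _)
      · simp [SimpleGraph.Walk.length_cons, hQ'len]; omega
      · intro x hx
        simp only [SimpleGraph.Walk.support_cons, List.mem_cons] at hx
        rcases hx with rfl | hx
        · left; exact SimpleGraph.Walk.start_mem_support _
        · rcases hQ'sub x hx with h | h
          · left; simp [SimpleGraph.Walk.support_cons, h]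
          · right; exact h

/-- If P is a longest (u,v)-path and H is a component of G − V(P),
then no two consecutive vertices of P both have a neighbour in H. -/
theorem stmt_3 {V : Type*} [Fintype V] [DecidableEq V] (G : SimpleGraph V)
    (u v : V) (huv : u ≠ v) (P : G.Walk u v) (hP : P.IsPath)
    (hlong : ∀ Q : G.Walk u v, Q.IsPath → Q.length ≤ P.length)
    (m : ℕ) (hm : m = P.length)
    (p : ℕ → V) (hp : ∀ i, p i = P.getVert i)
    (C : (G.induce {w : V | w ∉ P.support}).ConnectedComponent) :
    ∀ i < m, ¬ ((∃ h ∈ C.supp, G.Adj (p i) (↑h : V)) ∧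
      (∃ h ∈ C.supp, G.Adj (p (i + 1)) (↑h : V))) := by
  intro i hi ⟨⟨h1, hh1, ha⟩, ⟨h2, hh2, hb⟩⟩
  rw [SimpleGraph.ConnectedComponent.mem_supp_iff] at hh1 hh2
  have hreach : (G.induce {w : V | w ∉ P.support}).Reachable h1 h2 :=
    SimpleGraph.ConnectedComponent.exact (hh1.trans hh2.symm)
  obtain ⟨W0⟩ := hreach
  let W0' := W0.toPath
  let f := SimpleGraph.Embedding.induce (G := G) {w : V | w ∉ P.support}
  let W : G.Walk (↑h1) (↑h2) := (W0' : (G.induce _).Walk h1 h2).map f.toHom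
  have hWpath : W.IsPath := SimpleGraph.Walk.map_isPath_of_injective f.injective W0'.2
  have hWdisj : ∀ x ∈ W.support, x ∉ P.support := by
    intro x hx
    have hx : x ∈ ((W0' : (G.induce _).Walk h1 h2).map f.toHom).support := hx
    rw [SimpleGraph.Walk.support_map, List.mem_map] at hx
    obtain ⟨y, _, rfl⟩ := hx
    exact y.2
  have hiP : i < P.length := hm ▸ hi
  have ha' : G.Adj (P.getVert i) ↑h1 := (hp i) ▸ ha
  have hb' : G.Adj (P.getVert (i+1)) ↑h2 := (hp (i+1)) ▸ hb
  obtain ⟨Q, hQpath, hQlen, _⟩ :=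
    stmt_3_aux G P hP i hiP W hWpath ha' hb' hWdisj
  have := hlong Q hQpath
  omega
end

section
/- Let k be a positive integer and let G be a finite simple graph that is 2k-connected and (P₂ ∪ kP₁)-free. Let u ≠ v be vertices of G and let P be a longest (u,v)-path in G that is not a Hamilton path. Then every connected component of G − V(P) consists of a single vertex. -/
private lemma split_eq_aux {α : Type*} {w : α} (s : List α) : ∀ (s' t t' : List α),
    s ++ w :: t = s' ++ w :: t' → w ∉ s → w ∉ s' → s = s' ∧ t = t' := by
  induction s with
  | nil =>
    intro s' t t' h hw hw'
    cases s' with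
    | nil => simpa using h
    | cons a s' =>
      simp only [List.nil_append, List.cons_append, List.cons.injEq] at h
      exact absurd (by rw [h.1]; exact List.mem_cons_self) hw'
  | cons a s ih =>
    intro s' t t' h hw hw'
    cases s' with
    | nil =>
      simp only [List.cons_append, List.nil_append, List.cons.injEq] at h
      exact absurd (by rw [← h.1]; exact List.mem_cons_self) hw
    | cons a' s' =>
      simp only [List.cons_append, List.cons.injEq] at h
      obtain ⟨rfl, h2⟩ := h
      have := ih s' t t' h2 (fun hm => hw (List.mem_cons_of_mem _ hm))
        (fun hm => hw' (List.mem_cons_of_mem _ hm))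
      exact ⟨by rw [this.1], this.2⟩

private lemma nodup_split_unique {α : Type*} {l s s' t t' : List α} {w : α}
    (hn : l.Nodup) (h1 : l = s ++ w :: t) (h2 : l = s' ++ w :: t') : s = s' ∧ t = t' := by
  have d1 := List.disjoint_of_nodup_append (h1 ▸ hn)
  have d2 := List.disjoint_of_nodup_append (h2 ▸ hn)
  exact split_eq_aux s s' t t' (h1.symm.trans h2)
    (fun hm => d1 hm (List.mem_cons_self))
    (fun hm => d2 hm (List.mem_cons_self))

/-- in a nodup list, the element following `w` is unique -/
private lemma next_unique {α : Type*} {l pre post pre' post' : List α} {w x x' : α}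
    (hn : l.Nodup) (h1 : l = pre ++ w :: x :: post) (h2 : l = pre' ++ w :: x' :: post') :
    x = x' := by
  have := (nodup_split_unique hn h1 h2).2
  exact (List.cons.injEq _ _ _ _ ▸ this).1

/-- in a nodup list, the element preceding `x` is unique -/
private lemma prev_unique {α : Type*} {l pre post pre' post' : List α} {w w' x : α}
    (hn : l.Nodup) (h1 : l = pre ++ w :: x :: post) (h2 : l = pre' ++ w' :: x :: post') :
    w = w' := by
  have h1' : l = (pre ++ [w]) ++ x :: post := by rw [h1]; simp
  have h2' : l = (pre' ++ [w']) ++ x :: post' := by rw [h2]; simp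
  have := (nodup_split_unique hn h1' h2').1
  have := congrArg List.reverse this
  simp only [List.reverse_append, List.reverse_singleton, List.singleton_append,
    List.cons.injEq] at this
  exact this.1

private lemma before_lt {α : Type*} {l s t s'' t'' : List α} {w z : α}
    (hn : l.Nodup) (h : l = s ++ w :: t) (hz : z ∈ s) (h' : l = s'' ++ z :: t'') :
    s''.length < s.length := by
  subst h
  obtain ⟨j, hj, hjz⟩ := List.getElem_of_mem hz
  have hjl : j < (s ++ w :: t).length := by
    rw [List.length_append]; omega
  have hl1 : (s ++ w :: t)[j]'hjl = z := by
    rw [List.getElem_append_left hj]; exact hjz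
  have hsl' : s''.length < (s'' ++ z :: t'').length := by
    rw [List.length_append, List.length_cons]; omega
  have hsl : s''.length < (s ++ w :: t).length := by rw [h']; exact hsl'
  have hl2 : (s ++ w :: t)[s''.length]'hsl = z := by
    rw [List.getElem_of_eq h' hsl, List.getElem_append_right (le_refl _)]
    simp
  have : s''.length = j := (hn.getElem_inj_iff).mp (hl2.trans hl1.symm)
  omega
open SimpleGraph

section
variable {V : Type*} [DecidableEq V] {G : SimpleGraph V} {u v : V}

private lemma walk_cons_of_ne {x y : V} (p : G.Walk x y) (h : x ≠ y) :
    ∃ z, ∃ ha : G.Adj x z, ∃ q : G.Walk z y, p = Walk.cons ha q := by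
  cases p with
  | nil => exact absurd rfl h
  | cons ha q => exact ⟨_, ha, q, rfl⟩

private lemma support_concat {x y : V} (p : G.Walk x y) :
    ∃ pre, p.support = pre ++ [y] := by
  refine ⟨p.reverse.support.tail.reverse, ?_⟩
  have h1 : p.reverse.support = y :: p.reverse.support.tail := p.reverse.support_eq_cons
  have h2 : p.support = p.reverse.support.reverse := by
    rw [Walk.support_reverse, List.reverse_reverse]
  rw [h2]
  conv_lhs => rw [h1]
  simp

/-- the set of vertices reachable from `a` while avoiding `P.support` -/
private def Dset (P : G.Walk u v) (a : V) : Set V :=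
  {x | ∃ W : G.Walk a x, ∀ y ∈ W.support, y ∉ P.support}

/-- attachment vertices: on `P` and with a neighbour in `Dset` -/
private def Aset (P : G.Walk u v) (a : V) : Set V :=
  {w | w ∈ P.support ∧ ∃ c ∈ Dset P a, G.Adj w c}

variable {P : G.Walk u v} {a : V}

private lemma a_mem_Dset (ha : a ∉ P.support) : a ∈ Dset P a :=
  ⟨Walk.nil, by intro y hy; simp only [Walk.support_nil, List.mem_singleton] at hy; rwa [hy]⟩

private lemma Dset_not_mem_support {x : V} (hx : x ∈ Dset P a) : x ∉ P.support := by
  obtain ⟨W, hW⟩ := hx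
  exact hW x W.end_mem_support

private lemma Dset_closed {x y : V} (hx : x ∈ Dset P a) (hxy : G.Adj x y)
    (hy : y ∉ P.support) : y ∈ Dset P a := by
  obtain ⟨W, hW⟩ := hx
  refine ⟨W.append (Walk.cons hxy Walk.nil), ?_⟩
  intro z hz
  rw [Walk.support_append] at hz
  rcases List.mem_append.mp hz with h | h
  · exact hW z h
  · simp only [Walk.support_cons, Walk.support_nil, List.tail_cons, List.mem_singleton] at h
    rwa [h]

private lemma Dset_walk {x y : V} (hx : x ∈ Dset P a) (hy : y ∈ Dset P a) :
    ∃ Q : G.Walk x y, Q.support.Nodup ∧ ∀ z ∈ Q.support, z ∉ P.support := by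
  obtain ⟨W1, hW1⟩ := hx
  obtain ⟨W2, hW2⟩ := hy
  refine ⟨(W1.reverse.append W2).bypass, (Walk.bypass_isPath _).support_nodup, ?_⟩
  intro z hz
  have hz' := Walk.support_bypass_subset _ hz
  rw [Walk.support_append] at hz'
  rcases List.mem_append.mp hz' with h | h
  · rw [Walk.support_reverse] at h
    exact hW1 z (List.mem_reverse.mp h)
  · exact hW2 z (List.mem_of_mem_tail h)

/-- Any walk from u to v whose support is a permutation of `P.support ++ l` for
a nonempty fresh nodup list `l` contradicts maximality of `P`. -/
private lemma reroute (hP : P.IsPath)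
    (hlong : ∀ Q : G.Walk u v, Q.IsPath → Q.length ≤ P.length)
    (W : G.Walk u v) (l : List V) (hperm : W.support.Perm (P.support ++ l))
    (hne : l ≠ []) (hl : l.Nodup) (hdisj : ∀ y ∈ l, y ∉ P.support) : False := by
  have hnd : (P.support ++ l).Nodup :=
    List.nodup_append'.mpr ⟨hP.support_nodup, hl, fun y hy hy' => hdisj y hy' hy⟩
  have hWpath : W.IsPath := W.isPath_def.mpr (hperm.nodup_iff.mpr hnd)
  have hlen := hperm.length_eq
  rw [List.length_append, Walk.length_support, Walk.length_support] at hlen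
  have hpos : 0 < l.length := List.length_pos_iff.mpr hne
  have := hlong W hWpath
  omega

end

section
set_option linter.unusedSectionVars false
variable {V : Type*} [DecidableEq V] {G : SimpleGraph V} {u v : V}

/-- `x` is the successor of `w` along `P` -/
private def Succ (P : G.Walk u v) (w x : V) : Prop :=
  G.Adj w x ∧ ∃ pre post, P.support = pre ++ w :: x :: post

variable {P : G.Walk u v} {a : V}

private lemma succ_exists {w : V} (hw : w ∈ P.support) (hwv : w ≠ v) :
    ∃ x, Succ P w x := by
  have hspec := P.take_spec hw
  obtain ⟨z, hz, T, hPD⟩ := walk_cons_of_ne (P.dropUntil w hw) hwv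
  obtain ⟨pre, hpre⟩ := support_concat (P.takeUntil w hw)
  refine ⟨z, hz, pre, T.support.tail, ?_⟩
  have hPs : P.support = (P.takeUntil w hw).support ++ T.support := by
    conv_lhs => rw [← hspec]
    rw [Walk.support_append, hPD, Walk.support_cons, List.tail_cons]
  rw [hPs, hpre]
  conv_lhs => rw [T.support_eq_cons]
  simp

private lemma succ_mem {w x : V} (h : Succ P w x) : x ∈ P.support := by
  obtain ⟨_, pre, post, hd⟩ := h
  rw [hd]; simp

private lemma succ_inj (hPnd : P.support.Nodup) {w1 w2 x : V}
    (h1 : Succ P w1 x) (h2 : Succ P w2 x) : w1 = w2 := by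
  obtain ⟨_, pre1, post1, hd1⟩ := h1
  obtain ⟨_, pre2, post2, hd2⟩ := h2
  exact prev_unique hPnd hd1 hd2

/-- a successor of an attachment vertex is not adjacent to any vertex of `Dset` -/
private lemma nonadjD (hP : P.IsPath)
    (hlong : ∀ Q : G.Walk u v, Q.IsPath → Q.length ≤ P.length)
    {w x : V} (hwA : w ∈ Aset P a) (hwv : w ≠ v) (hsucc : Succ P w x)
    {z : V} (hz : z ∈ Dset P a) (hzx : G.Adj z x) : False := by
  obtain ⟨hw, c₀, hc₀, hwc₀⟩ := hwA
  obtain ⟨hadjwx, pre, post, hdec⟩ := hsucc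
  have hspec := P.take_spec hw
  obtain ⟨y1, hy1, T, hPD⟩ := walk_cons_of_ne (P.dropUntil w hw) hwv
  obtain ⟨pre1, hpre1⟩ := support_concat (P.takeUntil w hw)
  have hPs : P.support = (P.takeUntil w hw).support ++ T.support := by
    conv_lhs => rw [← hspec]
    rw [Walk.support_append, hPD, Walk.support_cons, List.tail_cons]
  have hsup1 : P.support = pre1 ++ w :: y1 :: T.support.tail := by
    rw [hPs, hpre1]
    conv_lhs => rw [T.support_eq_cons]
    simp
  have hy1x : y1 = x := next_unique hP.support_nodup hsup1 hdec
  subst hy1x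
  obtain ⟨Q, hQnd, hQav⟩ := Dset_walk hc₀ hz
  refine reroute hP hlong
    ((P.takeUntil w hw).append (Walk.cons hwc₀ (Q.append (Walk.cons hzx T))))
    Q.support ?_ Q.support_ne_nil hQnd hQav
  rw [hPs]
  refine List.perm_iff_count.mpr fun y => ?_
  simp only [Walk.support_append, Walk.support_cons, List.tail_cons, List.count_append]
  omega

/-- successors of two distinct attachment vertices are nonadjacent:
ordered version, where `w2` comes strictly after `w1` on `P`. -/
private lemma cross (hP : P.IsPath)
    (hlong : ∀ Q : G.Walk u v, Q.IsPath → Q.length ≤ P.length)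
    {w1 w2 x1 x2 : V} {pre1 post1 : List V}
    (hdec1 : P.support = pre1 ++ w1 :: x1 :: post1)
    (hw1A : w1 ∈ Aset P a) (hw2A : w2 ∈ Aset P a) (hw1v : w1 ≠ v) (hw2v : w2 ≠ v)
    (hx2 : Succ P w2 x2) (hmem : w2 ∈ x1 :: post1) (hadj : G.Adj x1 x2) : False := by
  obtain ⟨hw1, c₁, hc₁, hwc₁⟩ := hw1A
  obtain ⟨hw2, c₂, hc₂, hwc₂⟩ := hw2A
  obtain ⟨hadj2, pre2, post2, hdec2⟩ := hx2
  have hspec1 := P.take_spec hw1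
  obtain ⟨y1, hy1, T1, hPD1⟩ := walk_cons_of_ne (P.dropUntil w1 hw1) hw1v
  obtain ⟨pre1', hpre1'⟩ := support_concat (P.takeUntil w1 hw1)
  have hPs1 : P.support = (P.takeUntil w1 hw1).support ++ T1.support := by
    conv_lhs => rw [← hspec1]
    rw [Walk.support_append, hPD1, Walk.support_cons, List.tail_cons]
  have hsup1 : P.support = pre1' ++ w1 :: y1 :: T1.support.tail := by
    rw [hPs1, hpre1']
    conv_lhs => rw [T1.support_eq_cons]
    simp
  have hy1x : x1 = y1 := (next_unique hP.support_nodup hsup1 hdec1).symm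
  subst hy1x
  have hT1 : T1.support = x1 :: post1 := by
    rw [T1.support_eq_cons]
    exact (nodup_split_unique hP.support_nodup hsup1 hdec1).2
  have hmemT1 : w2 ∈ T1.support := by rw [hT1]; exact hmem
  have hspec2 := T1.take_spec hmemT1
  obtain ⟨y2, hy2, T2, hPD2⟩ := walk_cons_of_ne (T1.dropUntil w2 hmemT1) hw2v
  obtain ⟨pre2', hpre2'⟩ := support_concat (T1.takeUntil w2 hmemT1)
  have hT1s : T1.support = (T1.takeUntil w2 hmemT1).support ++ T2.support := by
    conv_lhs => rw [← hspec2]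
    rw [Walk.support_append, hPD2, Walk.support_cons, List.tail_cons]
  have hsup2 : P.support =
      ((P.takeUntil w1 hw1).support ++ pre2') ++ w2 :: y2 :: T2.support.tail := by
    rw [hPs1, hT1s, hpre2']
    conv_lhs => rw [T2.support_eq_cons]
    simp
  have hy2x : x2 = y2 := (next_unique hP.support_nodup hsup2 hdec2).symm
  subst hy2x
  obtain ⟨Q, hQnd, hQav⟩ := Dset_walk hc₁ hc₂
  refine reroute hP hlong
    ((P.takeUntil w1 hw1).append (Walk.cons hwc₁ (Q.append (Walk.cons hwc₂.symm
      ((T1.takeUntil w2 hmemT1).reverse.append (Walk.cons hadj T2))))))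
    Q.support ?_ Q.support_ne_nil hQnd hQav
  rw [hPs1, hT1s]
  refine List.perm_iff_count.mpr fun y => ?_
  simp only [Walk.support_append, Walk.support_cons, List.tail_cons,
    Walk.support_reverse, List.count_append, List.count_reverse]
  omega

/-- successors of distinct attachment vertices are nonadjacent -/
private lemma pair_nonadj (hP : P.IsPath)
    (hlong : ∀ Q : G.Walk u v, Q.IsPath → Q.length ≤ P.length)
    {w1 w2 x1 x2 : V}
    (hw1A : w1 ∈ Aset P a) (hw2A : w2 ∈ Aset P a) (hw1v : w1 ≠ v) (hw2v : w2 ≠ v)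
    (h1 : Succ P w1 x1) (h2 : Succ P w2 x2) (hne : w1 ≠ w2)
    (hadj : G.Adj x1 x2) : False := by
  obtain ⟨ha1, pre1, post1, hdec1⟩ := h1
  obtain ⟨ha2, pre2, post2, hdec2⟩ := h2
  have hmem2 : w2 ∈ P.support := hw2A.1
  rw [hdec1] at hmem2
  rcases List.mem_append.mp hmem2 with hin | hin
  · -- w2 ∈ pre1
    have hmem1 : w1 ∈ P.support := hw1A.1
    rw [hdec2] at hmem1
    rcases List.mem_append.mp hmem1 with hin1 | hin1
    · have l1 := before_lt hP.support_nodup hdec1 hin hdec2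
      have l2 := before_lt hP.support_nodup hdec2 hin1 hdec1
      omega
    · rcases List.mem_cons.mp hin1 with h | h
      · exact hne h
      · exact cross hP hlong hdec2 hw2A hw1A hw2v hw1v ⟨ha1, pre1, post1, hdec1⟩ h hadj.symm
  · rcases List.mem_cons.mp hin with h | h
    · exact hne h.symm
    · exact cross hP hlong hdec1 hw1A hw2A hw1v hw2v ⟨ha2, pre2, post2, hdec2⟩ h hadj

end

set_option maxHeartbeats 1000000 in
private lemma key {V : Type*} [Fintype V] [DecidableEq V] (G : SimpleGraph V) (k : ℕ)
    (hk : 1 ≤ k)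
    (hconn : ∀ S : Set V, S.ncard < 2 * k → (G.induce Sᶜ).Connected)
    (hfree : ¬ ∃ (a b : V) (c : Fin k → V), Function.Injective c ∧ a ≠ b ∧
      (∀ i, a ≠ c i) ∧ (∀ i, b ≠ c i) ∧ G.Adj a b ∧
      (∀ i, ¬ G.Adj a (c i)) ∧ (∀ i, ¬ G.Adj b (c i)) ∧ (∀ i j, ¬ G.Adj (c i) (c j)))
    (u v : V) (huv : u ≠ v) (P : G.Walk u v) (hP : P.IsPath)
    (hlong : ∀ Q : G.Walk u v, Q.IsPath → Q.length ≤ P.length)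
    (a b : V) (ha : a ∉ P.support) (hb : b ∉ P.support) (hab : G.Adj a b) : False := by
  classical
  have hPnd := hP.support_nodup
  have haD : a ∈ Dset P a := a_mem_Dset ha
  have hbD : b ∈ Dset P a := Dset_closed haD hab hb
  -- walks avoiding the attachment set cannot go from Dset to P
  have avoid : ∀ (x p : V) (W : G.Walk x p), x ∈ Dset P a → p ∈ P.support →
      (∀ y ∈ W.support, y ∉ Aset P a) → False := by
    intro x p W
    induction W with
    | nil => intro hx hp _; exact Dset_not_mem_support hx hp
    | @cons x y p hxy W ih =>
      intro hx hp hA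
      have hymem : y ∈ (Walk.cons hxy W).support := by
        rw [Walk.support_cons]
        exact List.mem_cons_of_mem _ W.start_mem_support
      by_cases hyP : y ∈ P.support
      · exact hA y hymem ⟨hyP, x, hx, hxy.symm⟩
      · refine ih (Dset_closed hx hxy hyP) hp fun z hz => hA z ?_
        rw [Walk.support_cons]
        exact List.mem_cons_of_mem _ hz
  -- some vertex of P is not an attachment vertex
  have hnotall : ∃ p ∈ P.support, p ∉ Aset P a := by
    by_contra hcon
    push_neg at hcon
    obtain ⟨y, hadjuy, P', hPeq⟩ := walk_cons_of_ne P huv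
    have hu : u ∈ Aset P a := hcon u P.start_mem_support
    have hy : y ∈ P.support := by
      rw [hPeq, Walk.support_cons]; exact List.mem_cons_of_mem _ P'.start_mem_support
    have hyA := hcon y hy
    obtain ⟨_, c, hc, huc⟩ := hu
    obtain ⟨_, c', hc', hyc'⟩ := hyA
    obtain ⟨Q, hQnd, hQav⟩ := Dset_walk hc hc'
    refine reroute hP hlong (Walk.cons huc (Q.append (Walk.cons hyc'.symm P')))
      Q.support ?_ Q.support_ne_nil hQnd hQav
    conv_rhs => rw [hPeq]
    simp only [Walk.support_cons, Walk.support_append, List.tail_cons, List.cons_append]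
    exact (List.perm_append_comm).cons u
  -- the attachment set has size at least 2k
  have h2k : 2 * k ≤ (Aset P a).ncard := by
    by_contra hlt
    push_neg at hlt
    have hco := hconn (Aset P a) hlt
    obtain ⟨p, hp, hpA⟩ := hnotall
    have haA : a ∈ (Aset P a)ᶜ := fun hA => ha hA.1
    obtain ⟨Wi⟩ := hco.preconnected ⟨a, haA⟩ ⟨p, hpA⟩
    let f : (G.induce (Aset P a)ᶜ) →g G := ⟨Subtype.val, fun {x y} h => by simpa using h⟩
    refine avoid a p (Wi.map f) haD hp ?_
    intro z hz
    rw [Walk.support_map] at hz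
    obtain ⟨zz, hzzmem, rfl⟩ := List.mem_map.mp hz
    exact zz.2
  -- select k attachment vertices different from v
  have hkA : k ≤ ((Aset P a) \ {v}).ncard := by
    have hsub : Aset P a ⊆ ((Aset P a) \ {v}) ∪ {v} := by
      intro x hx
      by_cases hxv : x = v
      · exact Or.inr hxv
      · exact Or.inl ⟨hx, hxv⟩
    have h1 : (Aset P a).ncard ≤ (((Aset P a) \ {v}) ∪ {v}).ncard :=
      Set.ncard_le_ncard hsub (Set.toFinite _)
    have h2 := Set.ncard_union_le ((Aset P a) \ {v}) {v}
    have h3 : ({v} : Set V).ncard = 1 := Set.ncard_singleton v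
    omega
  have hfin : ((Aset P a) \ {v}).Finite := Set.toFinite _
  have hFcard : ((Aset P a) \ {v}).ncard = hfin.toFinset.card :=
    Set.ncard_eq_toFinset_card _ hfin
  obtain ⟨t, hts, htc⟩ := Finset.exists_subset_card_eq
    (show k ≤ hfin.toFinset.card by omega)
  let e := Finset.equivFinOfCardEq htc
  let w : Fin k → V := fun i => ((e.symm i : t) : V)
  have hwA' : ∀ i, w i ∈ (Aset P a) \ {v} := fun i => hfin.mem_toFinset.mp (hts (e.symm i).2)
  have hwinj : Function.Injective w := by
    intro i j hij
    have h1 : e.symm i = e.symm j := Subtype.ext hij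
    simpa using congrArg e h1
  have hwv : ∀ i, w i ≠ v := fun i h => (hwA' i).2 (by rw [h]; exact Set.mem_singleton v)
  have hwmem : ∀ i, w i ∈ P.support := fun i => (hwA' i).1.1
  have hwAa : ∀ i, w i ∈ Aset P a := fun i => (hwA' i).1
  have hsx : ∀ i : Fin k, ∃ xx, Succ P (w i) xx := fun i => succ_exists (hwmem i) (hwv i)
  choose x hx using hsx
  refine hfree ⟨a, b, x, ?_, hab.ne, ?_, ?_, hab, ?_, ?_, ?_⟩
  · intro i j hij
    exact hwinj (succ_inj hPnd (hij ▸ hx i) (hx j))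
  · intro i h
    exact ha (by rw [h]; exact succ_mem (hx i))
  · intro i h
    exact hb (by rw [h]; exact succ_mem (hx i))
  · intro i hadj
    exact nonadjD hP hlong (hwAa i) (hwv i) (hx i) haD hadj
  · intro i hadj
    exact nonadjD hP hlong (hwAa i) (hwv i) (hx i) hbD hadj
  · intro i j hadj
    rcases eq_or_ne i j with rfl | hij
    · exact G.loopless.irrefl _ hadj
    · exact pair_nonadj hP hlong (hwAa i) (hwAa j) (hwv i) (hwv j) (hx i) (hx j)
        (fun h => hij (hwinj h)) hadj

/-- In a 2k-connected (P₂ ∪ kP₁)-free graph, if P is a longest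
(u,v)-path which is not a Hamilton path, then every component of G − V(P)
is a single vertex. -/
theorem stmt_4 {V : Type*} [Fintype V] [DecidableEq V] (G : SimpleGraph V) (k : ℕ)
    (hk : 1 ≤ k)
    (hcard : 2 * k < Fintype.card V)
    (hconn : ∀ S : Set V, S.ncard < 2 * k → (G.induce Sᶜ).Connected)
    (hfree : ¬ ∃ (a b : V) (c : Fin k → V), Function.Injective c ∧ a ≠ b ∧
      (∀ i, a ≠ c i) ∧ (∀ i, b ≠ c i) ∧ G.Adj a b ∧
      (∀ i, ¬ G.Adj a (c i)) ∧ (∀ i, ¬ G.Adj b (c i)) ∧ (∀ i j, ¬ G.Adj (c i) (c j)))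
    (u v : V) (huv : u ≠ v) (P : G.Walk u v) (hP : P.IsPath)
    (hlong : ∀ Q : G.Walk u v, Q.IsPath → Q.length ≤ P.length)
    (hnotham : ¬ ∀ w : V, w ∈ P.support) :
    ∀ C : (G.induce {w : V | w ∉ P.support}).ConnectedComponent,
      ∃ z, C.supp = {z} := by
  intro C
  obtain ⟨z0, hz0⟩ := C.exists_rep
  refine ⟨z0, ?_⟩
  ext x
  simp only [SimpleGraph.ConnectedComponent.mem_supp_iff, Set.mem_singleton_iff]
  constructor
  · intro hxC
    have hreach : (G.induce {w : V | w ∉ P.support}).Reachable x z0 :=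
      SimpleGraph.ConnectedComponent.exact (hxC.trans hz0.symm)
    obtain ⟨Wc⟩ := hreach
    cases Wc with
    | nil => rfl
    | @cons _ y _ hadj W' =>
      exfalso
      have hG : G.Adj (x : V) (y : V) := by simpa using hadj
      exact key G k hk hconn hfree u v huv P hP hlong (x : V) (y : V) x.2 y.2 hG
  · intro h
    rw [h]
    exact hz0
end

section
/- Let k be a positive integer and let G be a finite simple graph that is 2k-connected and (P₂ ∪ kP₁)-free. Let u ≠ v be vertices of G, let P be a longest (u,v)-path with vertex sequence p₀ = u, …, p_m = v, and let x ∈ V(G) \ V(P) be a vertex all of whose neighbors lie on P. Set J = {i : 0 ≤ i ≤ m, p_i ∈ N(x)} and N⁺ = {p_{i+1} : i ∈ J, i < m}. Let i ∈ J be such that J contains an element greater than i, let r be the smallest element of J greater than i, and let X ⊆ N⁺ be any set with p_{i+1} ∈ X and |X| = 2k − 1. Then for every integer j with 1 ≤ j ≤ r − i − 1: if j is odd, then p_{i+j} has no neighbor in X, and if j is even, then p_{i+j} has at least k + 1 neighbors in X. -/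
namespace Stmt5Aux

/-- ascending list of naturals [a, a+1, ..., b] (empty if b < a) -/
def ascL (a b : ℕ) : List ℕ := (List.range (b + 1 - a)).map (a + ·)

lemma mem_ascL {t a b : ℕ} : t ∈ ascL a b ↔ a ≤ t ∧ t ≤ b := by
  simp only [ascL, List.mem_map, List.mem_range]
  constructor
  · rintro ⟨s, hs, rfl⟩; omega
  · rintro ⟨h1, h2⟩; exact ⟨t - a, by omega, by omega⟩

lemma nodup_ascL {a b : ℕ} : (ascL a b).Nodup :=
  List.nodup_range.map (fun s t h => by omega)

lemma length_ascL {a b : ℕ} : (ascL a b).length = b + 1 - a := by simp [ascL]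

lemma ascL_ne_nil {a b : ℕ} (h : a ≤ b) : ascL a b ≠ [] := by
  intro hc
  have := length_ascL (a := a) (b := b)
  rw [hc] at this; simp at this; omega

lemma head?_ascL {a b : ℕ} (h : a ≤ b) : (ascL a b).head? = some a := by
  obtain ⟨n, hn⟩ : ∃ n, b + 1 - a = n + 1 := ⟨b - a, by omega⟩
  rw [ascL, hn, List.range_succ_eq_map]
  simp

lemma getLast?_ascL {a b : ℕ} (h : a ≤ b) : (ascL a b).getLast? = some b := by
  obtain ⟨n, hn⟩ : ∃ n, b + 1 - a = n + 1 := ⟨b - a, by omega⟩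
  rw [ascL, hn, List.range_succ, List.map_append, List.getLast?_append_of_ne_nil _ (by simp)]
  simp; omega

lemma chain'_ascL {S : ℕ → ℕ → Prop} {a b : ℕ} (h : ∀ t, a ≤ t → t < b → S t (t + 1)) :
    List.Chain' S (ascL a b) := by
  show List.IsChain S (ascL a b)
  by_cases hab : a ≤ b
  · obtain ⟨n, hn⟩ : ∃ n, b + 1 - a = n + 1 := ⟨b - a, by omega⟩
    rw [ascL, hn, List.isChain_map]
    refine (List.isChain_range_succ _ n).mpr fun s hs => ?_
    show S (a + s) (a + (s + 1))
    rw [← Nat.add_assoc]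
    exact h (a + s) (by omega) (by omega)
  · rw [ascL, show b + 1 - a = 0 by omega]
    simp

/-- descending list [b, b-1, ..., a] -/
def descL (a b : ℕ) : List ℕ := (ascL a b).reverse

lemma mem_descL {t a b : ℕ} : t ∈ descL a b ↔ a ≤ t ∧ t ≤ b := by
  simp [descL, mem_ascL]

lemma nodup_descL {a b : ℕ} : (descL a b).Nodup := by
  simp [descL, nodup_ascL]

lemma length_descL {a b : ℕ} : (descL a b).length = b + 1 - a := by
  simp [descL, length_ascL]

lemma head?_descL {a b : ℕ} (h : a ≤ b) : (descL a b).head? = some b := by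
  rw [descL, List.head?_reverse, getLast?_ascL h]

lemma getLast?_descL {a b : ℕ} (h : a ≤ b) : (descL a b).getLast? = some a := by
  rw [descL, List.getLast?_reverse, head?_ascL h]

lemma chain'_descL {S : ℕ → ℕ → Prop} {a b : ℕ} (h : ∀ t, a ≤ t → t < b → S (t + 1) t) :
    List.Chain' S (descL a b) := by
  show List.IsChain S (descL a b)
  rw [descL, List.isChain_reverse]
  exact chain'_ascL h

lemma exists_walk {V : Type*} (G : SimpleGraph V) :
    ∀ (T : List V) (a c : V), List.Chain G.Adj a T →
      (a :: T).getLast (List.cons_ne_nil a T) = c → ∃ w : G.Walk a c, w.support = a :: T := by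
  intro T
  induction T with
  | nil =>
    intro a c _ hc
    simp only [List.getLast_singleton] at hc
    subst hc
    exact ⟨SimpleGraph.Walk.nil, rfl⟩
  | cons b T ih =>
    intro a c hch hc
    have hch : G.Adj a b ∧ List.Chain G.Adj b T := List.isChain_cons_cons.mp hch
    obtain ⟨hab, h2⟩ := hch
    have hc' : (b :: T).getLast (List.cons_ne_nil b T) = c := by
      rw [← hc]; exact (List.getLast_cons _).symm
    obtain ⟨w, hw⟩ := ih b c h2 hc'
    exact ⟨SimpleGraph.Walk.cons hab w, by simp [hw]⟩

lemma getVert_injOn {V : Type*} {G : SimpleGraph V} :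
    ∀ {u v : V} (w : G.Walk u v), w.IsPath →
      ∀ s ≤ w.length, ∀ t ≤ w.length, w.getVert s = w.getVert t → s = t := by
  intro u v w
  induction w with
  | nil => intro _ s hs t ht _; simp at hs ht; omega
  | @cons a b c hadj q ih =>
    intro hpath s hs t ht heq
    have hq : q.IsPath := hpath.of_cons
    have hna : a ∉ q.support := by
      have := hpath.support_nodup
      simp only [SimpleGraph.Walk.support_cons, List.nodup_cons] at this
      exact this.1
    match s, t with
    | 0, 0 => rfl
    | 0, t + 1 =>
      exfalso
      simp only [SimpleGraph.Walk.getVert_zero, SimpleGraph.Walk.getVert_cons_succ] at heq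
      exact hna (SimpleGraph.Walk.mem_support_iff_exists_getVert.mpr
        ⟨t, heq.symm, by simpa [SimpleGraph.Walk.length_cons] using ht⟩)
    | s + 1, 0 =>
      exfalso
      simp only [SimpleGraph.Walk.getVert_zero, SimpleGraph.Walk.getVert_cons_succ] at heq
      exact hna (SimpleGraph.Walk.mem_support_iff_exists_getVert.mpr
        ⟨s, heq, by simpa [SimpleGraph.Walk.length_cons] using hs⟩)
    | s + 1, t + 1 =>
      simp only [SimpleGraph.Walk.getVert_cons_succ] at heq
      have := ih hq s (by simpa [SimpleGraph.Walk.length_cons] using hs)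
        t (by simpa [SimpleGraph.Walk.length_cons] using ht) heq
      omega

lemma finset_embed {V : Type*} {k : ℕ} (C : Finset V) (hC : C.card = k) :
    ∃ c : Fin k → V, Function.Injective c ∧ ∀ n, c n ∈ C := by
  refine ⟨fun n => (C.equivFin.symm (Fin.cast hC.symm n) : V), ?_, fun n => (C.equivFin.symm _).2⟩
  intro n n' h
  have := C.equivFin.symm.injective (Subtype.ext h)
  simpa [Fin.ext_iff] using this


lemma descL_ne_nil {a b : ℕ} (h : a ≤ b) : descL a b ≠ [] := by
  simp only [descL, ne_eq, List.reverse_eq_nil_iff]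
  exact ascL_ne_nil h

lemma app_ne_nil_right {α : Type*} {l₁ l₂ : List α} (h : l₂ ≠ []) : l₁ ++ l₂ ≠ [] :=
  fun hc => h (List.append_eq_nil_iff.mp hc).2

end Stmt5Aux


open Stmt5Aux in
/-- Claim about neighbours in X of vertices between two consecutive
neighbours of x on a longest path. -/
theorem stmt_5 {V : Type*} [Fintype V] [DecidableEq V] (G : SimpleGraph V)
    [DecidableRel G.Adj] (k : ℕ) (hk : 1 ≤ k)
    (hcard : 2 * k < Fintype.card V)
    (hconn : ∀ S : Set V, S.ncard < 2 * k → (G.induce Sᶜ).Connected)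
    (hfree : ¬ ∃ (a b : V) (c : Fin k → V), Function.Injective c ∧ a ≠ b ∧
      (∀ i, a ≠ c i) ∧ (∀ i, b ≠ c i) ∧ G.Adj a b ∧
      (∀ i, ¬ G.Adj a (c i)) ∧ (∀ i, ¬ G.Adj b (c i)) ∧ (∀ i j, ¬ G.Adj (c i) (c j)))
    (u v : V) (huv : u ≠ v) (P : G.Walk u v) (hP : P.IsPath)
    (hlong : ∀ Q : G.Walk u v, Q.IsPath → Q.length ≤ P.length)
    (m : ℕ) (hm : m = P.length)
    (p : ℕ → V) (hp : ∀ i, p i = P.getVert i)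
    (x : V) (hx : x ∉ P.support)
    (hxN : ∀ w, G.Adj x w → w ∈ P.support)
    (J : Set ℕ) (hJ : J = {i | i ≤ m ∧ G.Adj x (p i)})
    (Nplus : Set V) (hNplus : Nplus = {w | ∃ i ∈ J, i < m ∧ w = p (i + 1)})
    (i r : ℕ) (hi : i ∈ J) (hr : r ∈ J) (hir : i < r)
    (hrmin : ∀ j ∈ J, i < j → r ≤ j)
    (X : Finset V) (hXsub : ↑X ⊆ Nplus) (hX1 : p (i + 1) ∈ X)
    (hXcard : X.card = 2 * k - 1) :
    ∀ j : ℕ, 1 ≤ j → j ≤ r - i - 1 →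
      (Odd j → ∀ w ∈ X, ¬ G.Adj (p (i + j)) w) ∧
      (Even j → k + 1 ≤ (X.filter fun w => G.Adj (p (i + j)) w).card) := by
  clear hconn hcard
  -- basic facts about J
  have hJmem : ∀ l ∈ J, l ≤ m ∧ G.Adj x (p l) := fun l hl => by rw [hJ] at hl; exact hl
  have hJmem' : ∀ l, l ≤ m → G.Adj x (p l) → l ∈ J := fun l h1 h2 => by rw [hJ]; exact ⟨h1, h2⟩
  have hrm : r ≤ m := (hJmem r hr).1
  have him : i ≤ m := (hJmem i hi).1
  -- injectivity and support facts
  have hpinj : ∀ s ≤ m, ∀ t ≤ m, p s = p t → s = t := by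
    intro s hs t ht h
    rw [hp, hp] at h
    exact getVert_injOn P hP s (by omega) t (by omega) h
  have hpsupp : ∀ t, t ≤ m → p t ∈ P.support := fun t ht => by
    rw [hp]
    exact SimpleGraph.Walk.mem_support_iff_exists_getVert.mpr ⟨t, rfl, by omega⟩
  have hxp : ∀ t, t ≤ m → x ≠ p t := fun t ht h => hx (h ▸ hpsupp t ht)
  -- the extended vertex function
  set q : ℕ → V := fun t => if t = m + 1 then x else p t with hqdef
  have hqm : ∀ t, t ≤ m → q t = p t := fun t ht => by
    simp only [hqdef]; rw [if_neg (by omega)]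
  have hqx : q (m + 1) = x := by simp [hqdef]
  have hqinj : ∀ s ≤ m + 1, ∀ t ≤ m + 1, q s = q t → s = t := by
    intro s hs t ht h
    rcases Nat.lt_or_ge s (m + 1) with h1 | h1 <;> rcases Nat.lt_or_ge t (m + 1) with h2 | h2
    · rw [hqm s (by omega), hqm t (by omega)] at h; exact hpinj s (by omega) t (by omega) h
    · exfalso; have ht' : t = m + 1 := by omega
      rw [hqm s (by omega), ht', hqx] at h; exact hxp s (by omega) h.symm
    · exfalso; have hs' : s = m + 1 := by omega
      rw [hqm t (by omega), hs', hqx] at h; exact hxp t (by omega) h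
    · omega
  set S : ℕ → ℕ → Prop := fun s t => G.Adj (q s) (q t) with hSdef
  have hadj : ∀ t, t < m → G.Adj (p t) (p (t + 1)) := fun t ht => by
    rw [hp, hp]; exact P.adj_getVert_succ (by omega)
  have hSp : ∀ s t : ℕ, s ≤ m → t ≤ m → G.Adj (p s) (p t) → S s t := by
    intro s t hs ht h
    simp only [hSdef]; rw [hqm s hs, hqm t ht]; exact h
  have hSasc : ∀ a b : ℕ, b ≤ m → List.Chain' S (ascL a b) :=
    fun a b hb => chain'_ascL (fun t h1 h2 => hSp t (t+1) (by omega) (by omega) (hadj t (by omega)))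
  have hSdesc : ∀ a b : ℕ, b ≤ m → List.Chain' S (descL a b) :=
    fun a b hb => chain'_descL (fun t h1 h2 =>
      hSp (t+1) t (by omega) (by omega) (hadj t (by omega)).symm)
  have hSxr : ∀ l ∈ J, S l (m + 1) := fun l hl => by
    simp only [hSdef]; rw [hqm l (hJmem l hl).1, hqx]; exact (hJmem l hl).2.symm
  have hSxl : ∀ l ∈ J, S (m + 1) l := fun l hl => by
    simp only [hSdef]; rw [hqm l (hJmem l hl).1, hqx]; exact (hJmem l hl).2
  -- the master "no longer path" lemma
  have no_long : ∀ I : List ℕ, I.head? = some 0 → I.getLast? = some m → I.Nodup →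
      (∀ t ∈ I, t ≤ m + 1) → I.length = m + 2 → List.Chain' S I → False := by
    intro I h0 hlastI hnd hmem hlen hch
    obtain ⟨T, rfl⟩ : ∃ T, I = 0 :: T := by
      cases I with
      | nil => simp at h0
      | cons a T =>
        simp only [List.head?_cons, Option.some_inj] at h0
        exact ⟨T, by rw [h0]⟩
    have hchV : List.Chain' G.Adj ((0 :: T).map q) :=
      List.isChain_map_of_isChain q (fun a b h => h) hch
    rw [List.map_cons] at hchV
    have hchain : List.Chain G.Adj (q 0) (T.map q) := hchV
    have hlast2 : (q 0 :: T.map q).getLast (List.cons_ne_nil _ _) = v := by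
      have h1 : ((0 :: T).map q).getLast? = some (q m) := by
        rw [List.getLast?_map, hlastI]; rfl
      rw [List.map_cons] at h1
      rw [List.getLast?_eq_getLast_of_ne_nil (List.cons_ne_nil _ _)] at h1
      have h2 : q m = v := by
        rw [hqm m le_rfl, hp, hm]; exact P.getVert_length
      rw [← h2]
      exact Option.some_inj.mp h1
    obtain ⟨w, hwsupp⟩ := exists_walk G (T.map q) (q 0) v hchain hlast2
    have hq0 : q 0 = u := by rw [hqm 0 (by omega), hp]; exact P.getVert_zero
    have hw'path : (w.copy hq0 rfl).IsPath := by
      rw [SimpleGraph.Walk.isPath_copy, SimpleGraph.Walk.isPath_def, hwsupp, ← List.map_cons]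
      exact hnd.map_on (fun s hs t ht h => hqinj s (hmem s hs) t (hmem t ht) h)
    have hwlen : (w.copy hq0 rfl).length = m + 1 := by
      have h1 := SimpleGraph.Walk.length_support (w.copy hq0 rfl)
      rw [SimpleGraph.Walk.support_copy, hwsupp] at h1
      simp only [List.length_cons, List.length_map] at h1
      simp only [List.length_cons] at hlen
      omega
    have := hlong (w.copy hq0 rfl) hw'path
    rw [hwlen, ← hm] at this
    omega

  -- surgery F1: x cannot be adjacent to the successor of a neighbour
  have surgF1 : ∀ l, l ∈ J → l < m → G.Adj x (p (l + 1)) → False := by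
    intro l hlJ hlm hadjx
    apply no_long (ascL 0 l ++ ([m+1] ++ ascL (l+1) m))
    · rw [List.head?_append_of_ne_nil _ (ascL_ne_nil (by omega)), head?_ascL (by omega)]
    · rw [List.getLast?_append_of_ne_nil _ (app_ne_nil_right (ascL_ne_nil (by omega))),
        List.getLast?_append_of_ne_nil _ (ascL_ne_nil (by omega)), getLast?_ascL (by omega)]
    · refine List.nodup_append.mpr ⟨nodup_ascL, List.nodup_append.mpr ⟨by simp, nodup_ascL, ?_⟩, ?_⟩
      · intro t ht1 t' ht2
        simp only [List.mem_singleton] at ht1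
        rw [mem_ascL] at ht2
        omega
      · intro t ht1 t' ht2
        rw [mem_ascL] at ht1
        simp only [List.mem_append, List.mem_singleton, mem_ascL] at ht2
        omega
    · intro t ht
      simp only [List.mem_append, List.mem_singleton, mem_ascL] at ht
      omega
    · simp only [List.length_append, List.length_singleton, length_ascL]; omega
    · refine List.IsChain.append (hSasc 0 l (by omega))
        (List.IsChain.append (List.isChain_singleton _) (hSasc (l+1) m (by omega)) ?_) ?_
      · intro a ha b hb
        rw [head?_ascL (by omega)] at hb
        simp only [List.getLast?_singleton, Option.mem_def, Option.some.injEq] at ha hb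
        subst ha; subst hb
        simp only [hSdef]; rw [hqx, hqm (l+1) (by omega)]; exact hadjx
      · intro a ha b hb
        rw [getLast?_ascL (by omega)] at ha
        rw [List.head?_append_of_ne_nil _ (by simp)] at hb
        simp only [List.head?_cons, Option.mem_def, Option.some.injEq] at ha hb
        subst ha; subst hb
        exact hSxr l hlJ
  -- surgery F2: successors of neighbours form an independent set
  have surgF2 : ∀ l l', l < l' → l ∈ J → l' ∈ J → l' < m →
      G.Adj (p (l + 1)) (p (l' + 1)) → False := by
    intro l l' hll' hlJ hl'J hl'm hadj'
    have hlm : l < m := by omega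
    apply no_long (ascL 0 l ++ ([m+1] ++ (descL (l+1) l' ++ ascL (l'+1) m)))
    · rw [List.head?_append_of_ne_nil _ (ascL_ne_nil (by omega)), head?_ascL (by omega)]
    · rw [List.getLast?_append_of_ne_nil _
          (app_ne_nil_right (app_ne_nil_right (ascL_ne_nil (by omega)))),
        List.getLast?_append_of_ne_nil _ (app_ne_nil_right (ascL_ne_nil (by omega))),
        List.getLast?_append_of_ne_nil _ (ascL_ne_nil (by omega)), getLast?_ascL (by omega)]
    · refine List.nodup_append.mpr ⟨nodup_ascL, List.nodup_append.mpr ⟨by simp,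
        List.nodup_append.mpr ⟨nodup_descL, nodup_ascL, ?_⟩, ?_⟩, ?_⟩
      · intro t ht1 t' ht2
        rw [mem_descL] at ht1; rw [mem_ascL] at ht2; omega
      · intro t ht1 t' ht2
        simp only [List.mem_singleton] at ht1
        simp only [List.mem_append, mem_descL, mem_ascL] at ht2
        omega
      · intro t ht1 t' ht2
        rw [mem_ascL] at ht1
        simp only [List.mem_append, List.mem_singleton, mem_descL, mem_ascL] at ht2
        omega
    · intro t ht
      simp only [List.mem_append, List.mem_singleton, mem_descL, mem_ascL] at ht
      omega
    · simp only [List.length_append, List.length_singleton, length_ascL, length_descL]; omega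
    · refine List.IsChain.append (hSasc 0 l (by omega))
        (List.IsChain.append (List.isChain_singleton _)
          (List.IsChain.append (hSdesc (l+1) l' (by omega)) (hSasc (l'+1) m (by omega)) ?_) ?_) ?_
      · intro a ha b hb
        rw [getLast?_descL (by omega)] at ha
        rw [head?_ascL (by omega)] at hb
        simp only [Option.mem_def, Option.some.injEq] at ha hb
        subst ha; subst hb
        exact hSp (l+1) (l'+1) (by omega) (by omega) hadj'
      · intro a ha b hb
        rw [List.head?_append_of_ne_nil _ (descL_ne_nil (by omega))] at hb
        rw [head?_descL (by omega)] at hb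
        simp only [List.getLast?_singleton, Option.mem_def, Option.some.injEq] at ha hb
        subst ha; subst hb
        exact hSxl l' hl'J
      · intro a ha b hb
        rw [getLast?_ascL (by omega)] at ha
        rw [List.head?_append_of_ne_nil _ (by simp)] at hb
        simp only [List.head?_cons, Option.mem_def, Option.some.injEq] at ha hb
        subst ha; subst hb
        exact hSxr l hlJ

  -- surgery 7
  have surg7 : ∀ t l l', i + 1 ≤ t → t + 1 < r → l' < l → l ≤ i → l ∈ J → l' ∈ J →
      G.Adj (p (l' + 1)) (p t) → G.Adj (p (l + 1)) (p (t + 1)) → False := by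
    intro t l l' ht1 ht2 hl'l hli hlJ hl'J hadj1 hadj2
    have htm : t + 1 ≤ m := by omega
    have hlm : l < m := by omega
    apply no_long (ascL 0 l' ++ ([m+1] ++ (descL (l'+1) l ++ (descL (l+1) t ++ ascL (t+1) m))))
    · rw [List.head?_append_of_ne_nil _ (ascL_ne_nil (by omega)), head?_ascL (by omega)]
    · rw [List.getLast?_append_of_ne_nil _ (app_ne_nil_right (app_ne_nil_right
          (app_ne_nil_right (ascL_ne_nil (by omega : t + 1 ≤ m))))),
        List.getLast?_append_of_ne_nil _ (app_ne_nil_right (app_ne_nil_right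
          (ascL_ne_nil (by omega : t + 1 ≤ m)))),
        List.getLast?_append_of_ne_nil _ (app_ne_nil_right (ascL_ne_nil (by omega : t + 1 ≤ m))),
        List.getLast?_append_of_ne_nil _ (ascL_ne_nil (by omega : t + 1 ≤ m)),
        getLast?_ascL (by omega)]
    · refine List.nodup_append.mpr ⟨nodup_ascL, List.nodup_append.mpr ⟨by simp,
        List.nodup_append.mpr ⟨nodup_descL, List.nodup_append.mpr ⟨nodup_descL, nodup_ascL,
          ?_⟩, ?_⟩, ?_⟩, ?_⟩ <;>
      · intro s hs1 s' hs2
        simp only [List.mem_append, List.mem_singleton, mem_descL, mem_ascL] at hs1 hs2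
        omega
    · intro s hs
      simp only [List.mem_append, List.mem_singleton, mem_descL, mem_ascL] at hs
      omega
    · simp only [List.length_append, List.length_singleton, length_ascL, length_descL]; omega
    · refine List.IsChain.append (hSasc 0 l' (by omega))
        (List.IsChain.append (List.isChain_singleton _)
          (List.IsChain.append (hSdesc (l'+1) l (by omega))
            (List.IsChain.append (hSdesc (l+1) t (by omega)) (hSasc (t+1) m (by omega)) ?_)
            ?_) ?_) ?_
      · intro a ha b hb
        rw [getLast?_descL (by omega)] at ha
        rw [head?_ascL (by omega)] at hb
        simp only [Option.mem_def, Option.some.injEq] at ha hb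
        subst ha; subst hb
        exact hSp (l+1) (t+1) (by omega) (by omega) hadj2
      · intro a ha b hb
        rw [getLast?_descL (by omega)] at ha
        rw [List.head?_append_of_ne_nil _ (descL_ne_nil (by omega)), head?_descL (by omega)] at hb
        simp only [Option.mem_def, Option.some.injEq] at ha hb
        subst ha; subst hb
        exact hSp (l'+1) t (by omega) (by omega) hadj1
      · intro a ha b hb
        rw [List.head?_append_of_ne_nil _ (descL_ne_nil (by omega)), head?_descL (by omega)] at hb
        simp only [List.getLast?_singleton, Option.mem_def, Option.some.injEq] at ha hb
        subst ha; subst hb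
        exact hSxl l hlJ
      · intro a ha b hb
        rw [getLast?_ascL (by omega)] at ha
        rw [List.head?_append_of_ne_nil _ (by simp)] at hb
        simp only [List.head?_cons, Option.mem_def, Option.some.injEq] at ha hb
        subst ha; subst hb
        exact hSxr l' hl'J
  -- surgery 6
  have surg6 : ∀ t l l', i + 1 ≤ t → t + 1 < r → l ≤ i → r ≤ l' → l' < m → l ∈ J → l' ∈ J →
      G.Adj (p (l' + 1)) (p t) → G.Adj (p (l + 1)) (p (t + 1)) → False := by
    intro t l l' ht1 ht2 hli hrl' hl'm hlJ hl'J hadj1 hadj2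
    apply no_long (ascL 0 l ++ ([m+1] ++ (descL (t+1) l' ++ (ascL (l+1) t ++ ascL (l'+1) m))))
    · rw [List.head?_append_of_ne_nil _ (ascL_ne_nil (by omega)), head?_ascL (by omega)]
    · rw [List.getLast?_append_of_ne_nil _ (app_ne_nil_right (app_ne_nil_right
          (app_ne_nil_right (ascL_ne_nil (by omega : l' + 1 ≤ m))))),
        List.getLast?_append_of_ne_nil _ (app_ne_nil_right (app_ne_nil_right
          (ascL_ne_nil (by omega : l' + 1 ≤ m)))),
        List.getLast?_append_of_ne_nil _ (app_ne_nil_right (ascL_ne_nil (by omega : l' + 1 ≤ m))),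
        List.getLast?_append_of_ne_nil _ (ascL_ne_nil (by omega : l' + 1 ≤ m)),
        getLast?_ascL (by omega)]
    · refine List.nodup_append.mpr ⟨nodup_ascL, List.nodup_append.mpr ⟨by simp,
        List.nodup_append.mpr ⟨nodup_descL, List.nodup_append.mpr ⟨nodup_ascL, nodup_ascL,
          ?_⟩, ?_⟩, ?_⟩, ?_⟩ <;>
      · intro s hs1 s' hs2
        simp only [List.mem_append, List.mem_singleton, mem_descL, mem_ascL] at hs1 hs2
        omega
    · intro s hs
      simp only [List.mem_append, List.mem_singleton, mem_descL, mem_ascL] at hs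
      omega
    · simp only [List.length_append, List.length_singleton, length_ascL, length_descL]; omega
    · refine List.IsChain.append (hSasc 0 l (by omega))
        (List.IsChain.append (List.isChain_singleton _)
          (List.IsChain.append (hSdesc (t+1) l' (by omega))
            (List.IsChain.append (hSasc (l+1) t (by omega)) (hSasc (l'+1) m (by omega)) ?_)
            ?_) ?_) ?_
      · intro a ha b hb
        rw [getLast?_ascL (by omega)] at ha
        rw [head?_ascL (by omega)] at hb
        simp only [Option.mem_def, Option.some.injEq] at ha hb
        subst ha; subst hb
        exact hSp t (l'+1) (by omega) (by omega) hadj1.symm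
      · intro a ha b hb
        rw [getLast?_descL (by omega)] at ha
        rw [List.head?_append_of_ne_nil _ (ascL_ne_nil (by omega)), head?_ascL (by omega)] at hb
        simp only [Option.mem_def, Option.some.injEq] at ha hb
        subst ha; subst hb
        exact hSp (t+1) (l+1) (by omega) (by omega) hadj2.symm
      · intro a ha b hb
        rw [List.head?_append_of_ne_nil _ (descL_ne_nil (by omega)), head?_descL (by omega)] at hb
        simp only [List.getLast?_singleton, Option.mem_def, Option.some.injEq] at ha hb
        subst ha; subst hb
        exact hSxl l' hl'J
      · intro a ha b hb
        rw [getLast?_ascL (by omega)] at ha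
        rw [List.head?_append_of_ne_nil _ (by simp)] at hb
        simp only [List.head?_cons, Option.mem_def, Option.some.injEq] at ha hb
        subst ha; subst hb
        exact hSxr l hlJ
  -- surgery 4
  have surg4 : ∀ t l l', i + 1 ≤ t → t + 1 < r → r ≤ l' → l' < l → l < m → l ∈ J → l' ∈ J →
      G.Adj (p (l' + 1)) (p t) → G.Adj (p (l + 1)) (p (t + 1)) → False := by
    intro t l l' ht1 ht2 hrl' hl'l hlm hlJ hl'J hadj1 hadj2
    apply no_long (ascL 0 t ++ (ascL (l'+1) l ++ ([m+1] ++ (descL r l' ++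
      (descL (t+1) (r-1) ++ ascL (l+1) m)))))
    · rw [List.head?_append_of_ne_nil _ (ascL_ne_nil (by omega)), head?_ascL (by omega)]
    · rw [List.getLast?_append_of_ne_nil _ (app_ne_nil_right (app_ne_nil_right
          (app_ne_nil_right (app_ne_nil_right (ascL_ne_nil (by omega : l + 1 ≤ m)))))),
        List.getLast?_append_of_ne_nil _ (app_ne_nil_right (app_ne_nil_right
          (app_ne_nil_right (ascL_ne_nil (by omega : l + 1 ≤ m))))),
        List.getLast?_append_of_ne_nil _ (app_ne_nil_right (app_ne_nil_right
          (ascL_ne_nil (by omega : l + 1 ≤ m)))),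
        List.getLast?_append_of_ne_nil _ (app_ne_nil_right (ascL_ne_nil (by omega : l + 1 ≤ m))),
        List.getLast?_append_of_ne_nil _ (ascL_ne_nil (by omega : l + 1 ≤ m)),
        getLast?_ascL (by omega)]
    · refine List.nodup_append.mpr ⟨nodup_ascL, List.nodup_append.mpr ⟨nodup_ascL,
        List.nodup_append.mpr ⟨by simp, List.nodup_append.mpr ⟨nodup_descL,
          List.nodup_append.mpr ⟨nodup_descL, nodup_ascL, ?_⟩, ?_⟩, ?_⟩, ?_⟩, ?_⟩ <;>
      · intro s hs1 s' hs2
        simp only [List.mem_append, List.mem_singleton, mem_descL, mem_ascL] at hs1 hs2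
        omega
    · intro s hs
      simp only [List.mem_append, List.mem_singleton, mem_descL, mem_ascL] at hs
      omega
    · simp only [List.length_append, List.length_singleton, length_ascL, length_descL]; omega
    · refine List.IsChain.append (hSasc 0 t (by omega))
        (List.IsChain.append (hSasc (l'+1) l (by omega))
          (List.IsChain.append (List.isChain_singleton _)
            (List.IsChain.append (hSdesc r l' (by omega))
              (List.IsChain.append (hSdesc (t+1) (r-1) (by omega)) (hSasc (l+1) m (by omega)) ?_)
              ?_) ?_) ?_) ?_
      · intro a ha b hb
        rw [getLast?_descL (by omega)] at ha
        rw [head?_ascL (by omega)] at hb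
        simp only [Option.mem_def, Option.some.injEq] at ha hb
        subst ha; subst hb
        exact hSp (t+1) (l+1) (by omega) (by omega) hadj2.symm
      · intro a ha b hb
        rw [getLast?_descL (by omega)] at ha
        rw [List.head?_append_of_ne_nil _ (descL_ne_nil (by omega)), head?_descL (by omega)] at hb
        simp only [Option.mem_def, Option.some.injEq] at ha hb
        subst ha; subst hb
        have h5 : G.Adj (p (r-1)) (p (r-1+1)) := hadj (r-1) (by omega)
        rw [show r - 1 + 1 = r from by omega] at h5
        exact hSp r (r-1) (by omega) (by omega) h5.symm
      · intro a ha b hb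
        rw [List.head?_append_of_ne_nil _ (descL_ne_nil (by omega)), head?_descL (by omega)] at hb
        simp only [List.getLast?_singleton, Option.mem_def, Option.some.injEq] at ha hb
        subst ha; subst hb
        exact hSxl l' hl'J
      · intro a ha b hb
        rw [getLast?_ascL (by omega)] at ha
        rw [List.head?_append_of_ne_nil _ (by simp)] at hb
        simp only [List.head?_cons, Option.mem_def, Option.some.injEq] at ha hb
        subst ha; subst hb
        exact hSxr l hlJ
      · intro a ha b hb
        rw [getLast?_ascL (by omega)] at ha
        rw [List.head?_append_of_ne_nil _ (ascL_ne_nil (by omega : l' + 1 ≤ l)),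
          head?_ascL (by omega)] at hb
        simp only [Option.mem_def, Option.some.injEq] at ha hb
        subst ha; subst hb
        exact hSp t (l'+1) (by omega) (by omega) hadj1.symm

  -- combinatorial facts about X
  have hXidx : ∀ w ∈ X, ∃ l, l ∈ J ∧ l < m ∧ w = p (l + 1) := by
    intro w hw
    have h := hXsub hw
    rw [hNplus] at h
    obtain ⟨l, h1, h2, h3⟩ := h
    exact ⟨l, h1, h2, h3⟩
  have hXindep : ∀ w ∈ X, ∀ w' ∈ X, ¬ G.Adj w w' := by
    intro w hw w' hw' hadj'
    obtain ⟨l, hlJ, hlm, rfl⟩ := hXidx w hw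
    obtain ⟨l', hl'J, hl'm, rfl⟩ := hXidx w' hw'
    rcases Nat.lt_trichotomy l l' with h | h | h
    · exact surgF2 l l' h hlJ hl'J hl'm hadj'
    · rw [h] at hadj'; exact G.loopless.irrefl _ hadj'
    · exact surgF2 l' l h hl'J hlJ hlm hadj'.symm
  have hxX : ∀ w ∈ X, ¬ G.Adj x w := by
    intro w hw
    obtain ⟨l, hlJ, hlm, rfl⟩ := hXidx w hw
    exact surgF1 l hlJ hlm
  have hxnotinX : x ∉ X := by
    intro h
    obtain ⟨l, hlJ, hlm, heq⟩ := hXidx x h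
    exact hxp (l+1) (by omega) heq
  have hnotX : ∀ t, i + 1 < t → t < r → p t ∉ X := by
    intro t h1 h2 hmemX
    obtain ⟨l, hlJ, hlm, heq⟩ := hXidx _ hmemX
    have hlt : l + 1 = t := hpinj (l+1) (by omega) t (by omega) heq.symm
    have := hrmin l hlJ (by omega)
    omega
  have hF3 : ∀ t, i < t → t < r → ¬ G.Adj x (p t) := by
    intro t h1 h2 hadj'
    have := hrmin t (hJmem' t (by omega) hadj') h1
    omega
  -- lower bound for neighbours in X of a vertex adjacent to a member of X
  have hfloor : ∀ y, y ∉ X → ∀ w ∈ X, G.Adj y w →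
      k ≤ (X.filter fun z => G.Adj y z).card := by
    intro y hyX w hw hadj'
    by_contra hlt
    push_neg at hlt
    have hsub : k ≤ (X \ X.filter fun z => G.Adj y z).card := by
      rw [Finset.card_sdiff_of_subset (Finset.filter_subset _ _), hXcard]; omega
    obtain ⟨C, hCsub, hCcard⟩ := Finset.exists_subset_card_eq hsub
    have hCmem : ∀ z ∈ C, z ∈ X ∧ ¬ G.Adj y z := by
      intro z hz
      have h := Finset.mem_sdiff.mp (hCsub hz)
      exact ⟨h.1, fun hA => h.2 (Finset.mem_filter.mpr ⟨h.1, hA⟩)⟩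
    obtain ⟨c, hcinj, hcmem⟩ := finset_embed C hCcard
    apply hfree
    refine ⟨y, w, c, hcinj, ?_, ?_, ?_, hadj', ?_, ?_, ?_⟩
    · intro h; exact hyX (h ▸ hw)
    · intro n h; exact hyX (h ▸ (hCmem _ (hcmem n)).1)
    · intro n h
      exact (hCmem _ (hcmem n)).2 (h ▸ hadj')
    · intro n; exact (hCmem _ (hcmem n)).2
    · intro n; exact hXindep w hw _ (hCmem _ (hcmem n)).1
    · intro n n'; exact hXindep _ (hCmem _ (hcmem n)).1 _ (hCmem _ (hcmem n')).1
  -- main induction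
  intro j
  induction j using Nat.strong_induction_on with
  | _ j IH =>
    intro hj1 hj2
    have hijr : i + j < r := by omega
    constructor
    · -- odd case
      intro hodd w hw hadjbw
      obtain ⟨l, hlJ, hlm, rfl⟩ := hXidx w hw
      rcases Nat.eq_or_lt_of_le hj1 with h1 | h1
      · rw [← h1] at hadjbw
        exact hXindep _ hX1 _ hw hadjbw
      · obtain ⟨jj, rfl⟩ : ∃ jj, j = jj + 1 := ⟨j - 1, by omega⟩
        have hjj2 : 2 ≤ jj := by
          rcases hodd with ⟨c2, hc⟩; omega
        have heven : Even jj := by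
          rcases hodd with ⟨c2, hc⟩; exact ⟨c2, by omega⟩
        have hIH := (IH jj (by omega) (by omega) (by omega)).2 heven
        have hw' : p (l+1) ∈ X := hw
        have hbnotX : p (i + (jj+1)) ∉ X := hnotX (i + (jj+1)) (by omega) (by omega)
        have hbfl : k ≤ (X.filter fun z => G.Adj (p (i + (jj+1))) z).card :=
          hfloor _ hbnotX _ hw hadjbw
        have key : ∀ la lb, la < lb → la ∈ J → lb ∈ J → la ≠ i → lb ≠ i → la < m → lb < m →
            G.Adj (p (i+jj)) (p (la+1)) → G.Adj (p (i+jj)) (p (lb+1)) →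
            G.Adj (p (i+(jj+1))) (p (la+1)) → G.Adj (p (i+(jj+1))) (p (lb+1)) → False := by
          intro la lb hab haJ hbJ hai hbi ham hbm ha1 hb1 ha2 hb2
          rcases Nat.lt_or_ge lb i with h | h
          · exact surg7 (i+jj) lb la (by omega) (by omega) hab (by omega) hbJ haJ ha1.symm hb2.symm
          · have hbr : r ≤ lb := hrmin lb hbJ (by omega)
            rcases Nat.lt_or_ge la i with h' | h'
            · exact surg6 (i+jj) la lb (by omega) (by omega) (by omega) hbr hbm haJ hbJ
                hb1.symm ha2.symm
            · have har : r ≤ la := hrmin la haJ (by omega)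
              exact surg4 (i+jj) lb la (by omega) (by omega) har hab hbm hbJ haJ
                ha1.symm hb2.symm
        by_cases hbp : G.Adj (p (i + (jj+1))) (p (i+1))
        · have h2A : 1 < (X.filter fun z => G.Adj (p (i+jj)) z).card := by omega
          obtain ⟨w', hw'A, hw'ne⟩ := Finset.exists_mem_ne h2A (p (i+1))
          rw [Finset.mem_filter] at hw'A
          obtain ⟨l', hl'J, hl'm, rfl⟩ := hXidx w' hw'A.1
          have hl'ne : l' ≠ i := fun h => hw'ne (by rw [h])
          have hadja : G.Adj (p (l'+1)) (p (i + jj)) := hw'A.2.symm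
          rcases Nat.lt_or_ge l' i with hl'i | hl'i
          · exact surg7 (i + jj) i l' (by omega) (by omega) hl'i le_rfl hi hl'J hadja hbp.symm
          · have hl'r : r ≤ l' := hrmin l' hl'J (by omega)
            exact surg6 (i + jj) i l' (by omega) (by omega) le_rfl hl'r hl'm hi hl'J
              hadja hbp.symm
        · have hcap : 1 < ((X.filter fun z => G.Adj (p (i+jj)) z) ∩
              (X.filter fun z => G.Adj (p (i+(jj+1))) z)).card := by
            have hsub1 : ((X.filter fun z => G.Adj (p (i+jj)) z) ∪
                (X.filter fun z => G.Adj (p (i+(jj+1))) z)).card ≤ X.card :=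
              Finset.card_le_card (Finset.union_subset (Finset.filter_subset _ _)
                (Finset.filter_subset _ _))
            have h2 := Finset.card_inter_add_card_union
              (X.filter fun z => G.Adj (p (i+jj)) z)
              (X.filter fun z => G.Adj (p (i+(jj+1))) z)
            rw [hXcard] at hsub1
            omega
          obtain ⟨w₁, hw₁, w₂, hw₂, hw12⟩ := Finset.one_lt_card.mp hcap
          rw [Finset.mem_inter, Finset.mem_filter, Finset.mem_filter] at hw₁ hw₂
          obtain ⟨l₁, hl₁J, hl₁m, rfl⟩ := hXidx w₁ hw₁.1.1
          obtain ⟨l₂, hl₂J, hl₂m, rfl⟩ := hXidx w₂ hw₂.1.1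
          have hl₁i : l₁ ≠ i := fun h => hbp (by have h2 := hw₁.2.2; rw [h] at h2; exact h2)
          have hl₂i : l₂ ≠ i := fun h => hbp (by have h2 := hw₂.2.2; rw [h] at h2; exact h2)
          have hl12 : l₁ ≠ l₂ := fun h => hw12 (by rw [h])
          rcases Nat.lt_or_gt_of_ne hl12 with hlt | hgt
          · exact key l₁ l₂ hlt hl₁J hl₂J hl₁i hl₂i hl₁m hl₂m hw₁.1.2 hw₂.1.2 hw₁.2.2 hw₂.2.2
          · exact key l₂ l₁ hgt hl₂J hl₁J hl₂i hl₁i hl₂m hl₁m hw₂.1.2 hw₁.1.2 hw₂.2.2 hw₁.2.2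
    · -- even case
      intro heven
      by_contra hlt
      push_neg at hlt
      obtain ⟨jj, rfl⟩ : ∃ jj, j = jj + 1 := ⟨j - 1, by omega⟩
      have hjj1 : 1 ≤ jj := by
        rcases heven with ⟨c2, hc⟩; omega
      have hoddjj : Odd jj := by
        rcases heven with ⟨c2, hc⟩; exact ⟨c2 - 1, by omega⟩
      have hIH := (IH jj (by omega) (by omega) (by omega)).1 hoddjj
      have hD : k - 1 ≤ (X \ X.filter fun z => G.Adj (p (i+(jj+1))) z).card := by
        rw [Finset.card_sdiff_of_subset (Finset.filter_subset _ _), hXcard]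
        have := Finset.card_filter_le X (fun z => G.Adj (p (i+(jj+1))) z)
        omega
      obtain ⟨C0, hC0sub, hC0card⟩ := Finset.exists_subset_card_eq hD
      have hC0mem : ∀ z ∈ C0, z ∈ X ∧ ¬ G.Adj (p (i+(jj+1))) z := by
        intro z hz
        have h := Finset.mem_sdiff.mp (hC0sub hz)
        exact ⟨h.1, fun hA => h.2 (Finset.mem_filter.mpr ⟨h.1, hA⟩)⟩
      have hxC0 : x ∉ C0 := fun h => hxnotinX (hC0mem x h).1
      obtain ⟨c, hcinj, hcmem⟩ := finset_embed (insert x C0)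
        (show (insert x C0).card = k by
          rw [Finset.card_insert_of_notMem hxC0, hC0card]; omega)
      have hcmem' : ∀ n, c n = x ∨ (c n ∈ X ∧ ¬ G.Adj (p (i+(jj+1))) (c n)) := by
        intro n
        rcases Finset.mem_insert.mp (hcmem n) with h | h
        · exact Or.inl h
        · exact Or.inr (hC0mem _ h)
      have hbnotX : p (i + (jj+1)) ∉ X := hnotX (i + (jj+1)) (by omega) (by omega)
      have habadj : G.Adj (p (i+jj)) (p (i+(jj+1))) := hadj (i+jj) (by omega)
      apply hfree
      refine ⟨p (i+jj), p (i+(jj+1)), c, hcinj, ?_, ?_, ?_, habadj, ?_, ?_, ?_⟩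
      · intro h
        have := hpinj (i+jj) (by omega) (i+(jj+1)) (by omega) h
        omega
      · intro n h
        rcases hcmem' n with h' | h'
        · exact hxp (i+jj) (by omega) (h.trans h').symm
        · exact h'.2 (h ▸ habadj.symm)
      · intro n h
        rcases hcmem' n with h' | h'
        · exact hxp (i+(jj+1)) (by omega) (h.trans h').symm
        · exact hbnotX (h ▸ h'.1)
      · intro n hA
        rcases hcmem' n with h' | h'
        · rw [h'] at hA; exact hF3 (i+jj) (by omega) (by omega) hA.symm
        · exact hIH _ h'.1 hA
      · intro n hA
        rcases hcmem' n with h' | h'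
        · rw [h'] at hA; exact hF3 (i+(jj+1)) (by omega) (by omega) hA.symm
        · exact h'.2 hA
      · intro n n' hA
        rcases hcmem' n with h1 | h1 <;> rcases hcmem' n' with h2 | h2
        · rw [h1, h2] at hA; exact G.loopless.irrefl _ hA
        · rw [h1] at hA; exact hxX _ h2.1 hA
        · rw [h2] at hA; exact hxX _ h1.1 hA.symm
        · exact hXindep _ h1.1 _ h2.1 hA
end

section
/- Let k be a positive integer and let G be a finite simple graph that is 2k-connected and (P₂ ∪ kP₁)-free. Let u ≠ v be vertices of G, let P be a longest (u,v)-path with vertex sequence p₀ = u, …, p_m = v, and let x ∈ V(G) \ V(P) be a vertex all of whose neighbors lie on P. Set J = {i : 0 ≤ i ≤ m, p_i ∈ N(x)}, let s = min J, and set N⁺ = {p_{i+1} : i ∈ J, i < m}. Then for every odd integer j with 1 ≤ j ≤ s, the vertex p_{s−j} has no neighbor in N⁺. -/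
open SimpleGraph

private lemma chain_walk' {V : Type*} {G : SimpleGraph V} (q : ℕ → V) :
    ∀ (n a L : ℕ), a + n = L → (∀ i, i < L → G.Adj (q i) (q (i + 1))) →
      ∃ W : G.Walk (q a) (q L), W.length = n ∧
        W.support = (List.range' a (n + 1)).map q := by
  intro n
  induction n with
  | zero =>
      intro a L ha _
      have h : a = L := by omega
      subst h
      exact ⟨Walk.nil, rfl, by simp⟩
  | succ n ih =>
      intro a L ha hadj
      obtain ⟨W', hl, hsup⟩ := ih (a + 1) L (by omega) hadj
      refine ⟨Walk.cons (hadj a (by omega)) W', by simp [hl], ?_⟩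
      rw [Walk.support_cons, hsup]
      conv_rhs => rw [List.range'_succ]
      rw [List.map_cons]

private lemma chain_path' {V : Type*} {G : SimpleGraph V} (q : ℕ → V) (L : ℕ)
    (hadj : ∀ i, i < L → G.Adj (q i) (q (i + 1)))
    (hinj : ∀ i j, i ≤ L → j ≤ L → q i = q j → i = j) :
    ∃ W : G.Walk (q 0) (q L), W.IsPath ∧ W.length = L := by
  obtain ⟨W, hl, hsup⟩ := chain_walk' q L 0 L (by omega) hadj
  refine ⟨W, ?_, hl⟩
  rw [Walk.isPath_def, hsup]
  refine List.Nodup.map_on ?_ List.nodup_range'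
  intro a ha b hb hab
  rw [List.mem_range'] at ha hb
  exact hinj a b (by omega) (by omega) hab

set_option maxHeartbeats 4000000 in
/-- Vertices at odd distance before the first neighbour of x on P
have no neighbour in N⁺. -/
theorem stmt_7 {V : Type*} [Fintype V] [DecidableEq V] (G : SimpleGraph V) (k : ℕ)
    (hk : 1 ≤ k)
    (hcard : 2 * k < Fintype.card V)
    (hconn : ∀ S : Set V, S.ncard < 2 * k → (G.induce Sᶜ).Connected)
    (hfree : ¬ ∃ (a b : V) (c : Fin k → V), Function.Injective c ∧ a ≠ b ∧
      (∀ i, a ≠ c i) ∧ (∀ i, b ≠ c i) ∧ G.Adj a b ∧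
      (∀ i, ¬ G.Adj a (c i)) ∧ (∀ i, ¬ G.Adj b (c i)) ∧ (∀ i j, ¬ G.Adj (c i) (c j)))
    (u v : V) (huv : u ≠ v) (P : G.Walk u v) (hP : P.IsPath)
    (hlong : ∀ Q : G.Walk u v, Q.IsPath → Q.length ≤ P.length)
    (m : ℕ) (hm : m = P.length)
    (p : ℕ → V) (hp : ∀ i, p i = P.getVert i)
    (x : V) (hx : x ∉ P.support)
    (hxN : ∀ w, G.Adj x w → w ∈ P.support)
    (J : Set ℕ) (hJ : J = {i | i ≤ m ∧ G.Adj x (p i)})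
    (s : ℕ) (hs : s = sInf J)
    (Nplus : Set V) (hNplus : Nplus = {w | ∃ i ∈ J, i < m ∧ w = p (i + 1)}) :
    ∀ j : ℕ, Odd j → 1 ≤ j → j ≤ s →
      ∀ w ∈ Nplus, ¬ G.Adj (p (s - j)) w := by
  classical
  -- basic facts about p
  have hp0 : p 0 = u := by rw [hp]; exact P.getVert_zero
  have hpv : p m = v := by rw [hp, hm]; exact P.getVert_length
  have hpv' : ∀ c : ℕ, c = m → p c = v := fun c hc => hc ▸ hpv
  have padd : ∀ a b : ℕ, b = a + 1 → a < m → G.Adj (p a) (p b) := by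
    intro a b hb ha
    subst hb
    rw [hp, hp]
    exact P.adj_getVert_succ (by omega)
  have padd' : ∀ a b : ℕ, a = b + 1 → b < m → G.Adj (p a) (p b) :=
    fun a b hb h => (padd b a hb h).symm
  have pinj : ∀ a b : ℕ, a ≤ m → b ≤ m → p a = p b → a = b := by
    have key : ∀ (w w' : V) (W : G.Walk w w'), W.IsPath →
        ∀ a b : ℕ, a ≤ W.length → b ≤ W.length → W.getVert a = W.getVert b → a = b := by
      intro w w' W
      induction W with
      | nil => intro _ a b ha hb _; simp at ha hb; omega
      | cons h W ih =>
          intro hpath a b ha hb hab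
          obtain ⟨hp1, hns⟩ := (Walk.cons_isPath_iff h W).mp hpath
          match a, b with
          | 0, 0 => rfl
          | 0, b + 1 =>
              exfalso
              rw [Walk.getVert_zero, Walk.getVert_cons_succ] at hab
              exact hns (by
                rw [hab]
                exact Walk.mem_support_iff_exists_getVert.mpr ⟨b, rfl, by
                  simp at hb; omega⟩)
          | a + 1, 0 =>
              exfalso
              rw [Walk.getVert_zero, Walk.getVert_cons_succ] at hab
              exact hns (by
                rw [← hab]
                exact Walk.mem_support_iff_exists_getVert.mpr ⟨a, rfl, by
                  simp at ha; omega⟩)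
          | a + 1, b + 1 =>
              rw [Walk.getVert_cons_succ, Walk.getVert_cons_succ] at hab
              have := ih hp1 a b (by simp at ha; omega) (by simp at hb; omega) hab
              omega
    intro a b ha hb hab
    rw [hp, hp] at hab
    exact key u v P hP a b (by omega) (by omega) hab
  have pne : ∀ a b : ℕ, a ≤ m → b ≤ m → a ≠ b → p a ≠ p b :=
    fun a b ha hb hne he => hne (pinj a b ha hb he)
  have xne : ∀ a : ℕ, a ≤ m → p a ≠ x := by
    intro a ha he
    apply hx
    rw [← he, hp]
    exact Walk.mem_support_iff_exists_getVert.mpr ⟨a, rfl, by omega⟩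
  have hJmem : ∀ r : ℕ, r ∈ J ↔ (r ≤ m ∧ G.Adj x (p r)) := by
    intro r; rw [hJ]; exact Iff.rfl
  have hnotJ : ∀ r : ℕ, r < s → r ≤ m → ¬ G.Adj x (p r) := by
    intro r hrs hrm hadj
    have : r ∈ J := (hJmem r).mpr ⟨hrm, hadj⟩
    have := hs ▸ Nat.sInf_le this
    omega
  -- longer-path contradiction principle
  have hlonger : ∀ q : ℕ → V, q 0 = u → q (m + 1) = v →
      (∀ r, r < m + 1 → G.Adj (q r) (q (r + 1))) →
      (∀ a b, a ≤ m + 1 → b ≤ m + 1 → q a = q b → a = b) → False := by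
    intro q h0 hv hadj hinj
    obtain ⟨W, hWp, hWl⟩ := chain_path' q (m + 1) hadj hinj
    have := hlong (W.copy h0 hv) ((Walk.isPath_copy _ _ _).mpr hWp)
    rw [Walk.length_copy] at this
    omega
  -- Rotation A : x cannot be adjacent to a successor of a neighbour
  have hA : ∀ t, t ∈ J → t < m → ¬ G.Adj x (p (t + 1)) := by
    intro t htJ htm hadjx
    have hxt : G.Adj x (p t) := ((hJmem t).mp htJ).2
    have hw1 : ∀ c : ℕ, c = t → G.Adj (p c) x := fun c hc => hc ▸ hxt.symm
    have hw2 : ∀ c : ℕ, c = t + 1 → G.Adj x (p c) := fun c hc => hc ▸ hadjx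
    set q : ℕ → V := fun r => if r ≤ t then p r else if r = t + 1 then x else p (r - 1)
      with hq
    refine hlonger q ?_ ?_ ?_ ?_
    · simp only [hq]
      split_ifs <;> first | exact hp0 | (exfalso; omega)
    · simp only [hq]
      split_ifs <;> first | exact hpv' _ (by omega) | (exfalso; omega)
    · intro r hr
      simp only [hq]
      split_ifs <;>
        first
          | (exfalso; omega)
          | exact padd _ _ (by omega) (by omega)
          | exact padd' _ _ (by omega) (by omega)
          | exact hw1 _ (by omega)
          | exact hw2 _ (by omega)
    · intro a b ha hb
      simp only [hq]
      split_ifs <;> intro h <;>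
        first
          | omega
          | (have := pinj _ _ (by omega) (by omega) h; omega)
          | (exact absurd h (xne _ (by omega)))
          | (exact absurd h.symm (xne _ (by omega)))
  -- Rotation B : N+ is independent
  have hB : ∀ t t' : ℕ, t ∈ J → t' ∈ J → t < t' → t' < m →
      ¬ G.Adj (p (t + 1)) (p (t' + 1)) := by
    intro t t' htJ ht'J htt' ht'm hadjc
    have hxt : G.Adj x (p t) := ((hJmem t).mp htJ).2
    have hxt' : G.Adj x (p t') := ((hJmem t').mp ht'J).2
    have hw1 : ∀ c : ℕ, c = t → G.Adj (p c) x := fun c hc => hc ▸ hxt.symm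
    have hw2 : ∀ c : ℕ, c = t' → G.Adj x (p c) := fun c hc => hc ▸ hxt'
    have hw3 : ∀ c d : ℕ, c = t + 1 → d = t' + 1 → G.Adj (p c) (p d) := by
      intro c d hc hd; rw [hc, hd]; exact hadjc
    set q : ℕ → V := fun r =>
      if r ≤ t then p r
      else if r = t + 1 then x
      else if r ≤ t' + 1 then p (t + t' + 2 - r)
      else p (r - 1) with hq
    refine hlonger q ?_ ?_ ?_ ?_
    · simp only [hq]
      split_ifs <;> first | exact hp0 | (exfalso; omega)
    · simp only [hq]
      split_ifs <;> first | exact hpv' _ (by omega) | (exfalso; omega)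
    · intro r hr
      simp only [hq]
      split_ifs <;>
        first
          | (exfalso; omega)
          | exact padd _ _ (by omega) (by omega)
          | exact padd' _ _ (by omega) (by omega)
          | exact hw1 _ (by omega)
          | exact hw2 _ (by omega)
          | exact hw3 _ _ (by omega) (by omega)
    · intro a b ha hb
      simp only [hq]
      split_ifs <;> intro h <;>
        first
          | omega
          | (have := pinj _ _ (by omega) (by omega) h; omega)
          | (exact absurd h (xne _ (by omega)))
          | (exact absurd h.symm (xne _ (by omega)))
  -- Rotation R3
  have hR3 : ∀ jj ii ii' : ℕ, 1 ≤ jj → jj ≤ s → ii ∈ J → ii' ∈ J → ii < ii' → ii' < m →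
      G.Adj (p (s - jj)) (p (ii + 1)) → G.Adj (p (s - jj + 1)) (p (ii' + 1)) → False := by
    intro jj ii ii' h1 hjs hiJ hi'J hii hi'm hc1 hc2
    have hsi : s ≤ ii := hs ▸ Nat.sInf_le hiJ
    have hxi : G.Adj x (p ii) := ((hJmem ii).mp hiJ).2
    have hxi' : G.Adj x (p ii') := ((hJmem ii').mp hi'J).2
    have hw1 : ∀ c d : ℕ, c = s - jj → d = ii + 1 → G.Adj (p c) (p d) := by
      intro c d hc hd; rw [hc, hd]; exact hc1
    have hw2 : ∀ c : ℕ, c = ii' → G.Adj (p c) x := fun c hc => hc ▸ hxi'.symm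
    have hw3 : ∀ c : ℕ, c = ii → G.Adj x (p c) := fun c hc => hc ▸ hxi
    have hw4 : ∀ c d : ℕ, c = s - jj + 1 → d = ii' + 1 → G.Adj (p c) (p d) := by
      intro c d hc hd; rw [hc, hd]; exact hc2
    set q : ℕ → V := fun r =>
      if r ≤ s - jj then p r
      else if r ≤ s - jj + (ii' - ii) then p (ii + r - (s - jj))
      else if r = s - jj + (ii' - ii) + 1 then x
      else if r ≤ ii' + 1 then p (s - jj + (ii' - ii) + 2 + ii - r)
      else p (r - 1) with hq
    refine hlonger q ?_ ?_ ?_ ?_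
    · simp only [hq]
      split_ifs <;> first | exact hp0 | (exfalso; omega)
    · simp only [hq]
      split_ifs <;> first | exact hpv' _ (by omega) | (exfalso; omega)
    · intro r hr
      simp only [hq]
      split_ifs <;>
        first
          | (exfalso; omega)
          | exact padd _ _ (by omega) (by omega)
          | exact padd' _ _ (by omega) (by omega)
          | exact hw1 _ _ (by omega) (by omega)
          | exact hw2 _ (by omega)
          | exact hw3 _ (by omega)
          | exact hw4 _ _ (by omega) (by omega)
    · intro a b ha hb
      simp only [hq]
      split_ifs <;> intro h <;>
        first
          | omega
          | (have := pinj _ _ (by omega) (by omega) h; omega)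
          | (exact absurd h (xne _ (by omega)))
          | (exact absurd h.symm (xne _ (by omega)))
  -- x has at least 2k neighbours
  set Jfin : Finset ℕ := (Finset.range (m + 1)).filter (· ∈ J) with hJfin
  have hJfin_mem : ∀ r : ℕ, r ∈ Jfin ↔ (r < m + 1 ∧ r ∈ J) := by
    intro r
    simp [hJfin, Finset.mem_filter, Finset.mem_range]
  set NB : Finset V := Finset.univ.filter (fun w => G.Adj x w) with hNB
  have hNBmem : ∀ w : V, w ∈ NB ↔ G.Adj x w := by
    intro w; simp [hNB]
  have hNBimg : NB = Jfin.image p := by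
    ext w
    rw [hNBmem, Finset.mem_image]
    constructor
    · intro hadj
      have hw : w ∈ P.support := hxN w hadj
      obtain ⟨n, hn, hnl⟩ := Walk.mem_support_iff_exists_getVert.mp hw
      have hpn : p n = w := by rw [hp]; exact hn
      refine ⟨n, (hJfin_mem n).mpr ⟨by omega, (hJmem n).mpr ⟨by omega, ?_⟩⟩, hpn⟩
      rw [hpn]; exact hadj
    · rintro ⟨r, hr, rfl⟩
      exact ((hJmem r).mp ((hJfin_mem r).mp hr).2).2
  have hJcard : 2 * k ≤ Jfin.card := by
    by_contra hlt
    push_neg at hlt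
    have hNBcard : NB.card < 2 * k := by
      rw [hNBimg]
      exact lt_of_le_of_lt Finset.card_image_le hlt
    have hncard : ((NB : Set V)).ncard < 2 * k := by
      rw [Set.ncard_coe_finset]; exact hNBcard
    have hcon := hconn _ hncard
    have hxS : x ∈ ((NB : Set V))ᶜ := by
      simp only [Set.mem_compl_iff, Finset.mem_coe]
      rw [hNBmem]
      exact G.loopless.irrefl x
    have hcompl : 1 < NBᶜ.card := by
      rw [Finset.card_compl]
      omega
    obtain ⟨y, hy, hyx⟩ := Finset.exists_mem_ne hcompl x
    have hyS : y ∈ ((NB : Set V))ᶜ := by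
      simp only [Set.mem_compl_iff, Finset.mem_coe]
      exact Finset.mem_compl.mp hy
    obtain ⟨W⟩ := hcon.preconnected ⟨x, hxS⟩ ⟨y, hyS⟩
    have hnil : ¬ W.Nil := by
      intro hnil
      have := congrArg Subtype.val hnil.eq
      exact hyx this.symm
    have hadj1 := Walk.adj_snd hnil
    have hadj1' : G.Adj x (↑(W.getVert 1) : V) := hadj1
    have hmem : (↑(W.getVert 1) : V) ∈ NB := (hNBmem _).mpr hadj1'
    have h2 := (W.getVert 1).2
    rw [Set.mem_compl_iff, Finset.mem_coe] at h2
    exact h2 hmem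
  -- counting principle with x among the candidates
  have HF1 : ∀ y z : V, G.Adj y z → ¬ G.Adj x y → ¬ G.Adj x z → y ≠ x → z ≠ x →
      ∀ C : Finset ℕ,
        (∀ t ∈ C, (t ∈ J ∧ t < m) ∧ ¬ G.Adj y (p (t + 1)) ∧ ¬ G.Adj z (p (t + 1)) ∧
          y ≠ p (t + 1) ∧ z ≠ p (t + 1)) →
        k ≤ C.card + 1 → False := by
    intro y z hyz hxy hxz hyx hzx C hC hcard'
    obtain ⟨F, hFC, hFcard⟩ := Finset.exists_subset_card_eq (show k - 1 ≤ C.card by omega)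
    have e := F.orderIsoOfFin hFcard
    set f : ℕ → ℕ := fun n => if h : n < k - 1 then ((e ⟨n, h⟩ : F) : ℕ) else 0 with hf
    have hfC : ∀ n, n < k - 1 → f n ∈ C := by
      intro n hn
      simp only [hf]
      rw [dif_pos hn]
      exact hFC (e ⟨n, hn⟩).2
    have hfJ : ∀ n, n < k - 1 → f n ∈ J ∧ f n < m := fun n hn => (hC _ (hfC n hn)).1
    have hfinj : ∀ n n', n < k - 1 → n' < k - 1 → f n = f n' → n = n' := by
      intro n n' hn hn' hff
      simp only [hf] at hff
      rw [dif_pos hn, dif_pos hn'] at hff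
      have h2 := e.injective (Subtype.coe_injective hff)
      exact congrArg Fin.val h2
    set c : Fin k → V := fun l => if (l : ℕ) = 0 then x else p (f ((l : ℕ) - 1) + 1) with hc
    have hcval : ∀ l : Fin k, c l = x ∨ ∃ t, t ∈ C ∧ c l = p (t + 1) := by
      intro l
      simp only [hc]
      by_cases h1 : (l : ℕ) = 0
      · rw [if_pos h1]; left; rfl
      · rw [if_neg h1]
        right
        exact ⟨f ((l : ℕ) - 1), hfC _ (by have := l.isLt; omega), rfl⟩
    have hcinj : Function.Injective c := by
      intro l l' hll
      simp only [hc] at hll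
      by_cases h1 : (l : ℕ) = 0 <;> by_cases h2 : (l' : ℕ) = 0
      · rw [if_pos h1, if_pos h2] at hll
        exact Fin.ext (by omega)
      · rw [if_pos h1, if_neg h2] at hll
        exact absurd hll.symm
          (xne _ (by have := (hfJ ((l' : ℕ) - 1) (by have := l'.isLt; omega)).2; omega))
      · rw [if_neg h1, if_pos h2] at hll
        exact absurd hll
          (xne _ (by have := (hfJ ((l : ℕ) - 1) (by have := l.isLt; omega)).2; omega))
      · rw [if_neg h1, if_neg h2] at hll
        have hb1 := (hfJ ((l : ℕ) - 1) (by have := l.isLt; omega)).2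
        have hb2 := (hfJ ((l' : ℕ) - 1) (by have := l'.isLt; omega)).2
        have h3 := pinj _ _ (by omega) (by omega) hll
        have h4 := hfinj ((l : ℕ) - 1) ((l' : ℕ) - 1) (by have := l.isLt; omega) (by have := l'.isLt; omega) (by omega)
        exact Fin.ext (by omega)
    refine hfree ⟨y, z, c, hcinj, G.ne_of_adj hyz, ?_, ?_, hyz, ?_, ?_, ?_⟩
    · intro l
      rcases hcval l with h | ⟨t, ht, hh⟩
      · rw [h]; exact hyx
      · rw [hh]; exact (hC t ht).2.2.2.1
    · intro l
      rcases hcval l with h | ⟨t, ht, hh⟩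
      · rw [h]; exact hzx
      · rw [hh]; exact (hC t ht).2.2.2.2
    · intro l
      rcases hcval l with h | ⟨t, ht, hh⟩
      · rw [h]; exact fun hadj => hxy hadj.symm
      · rw [hh]; exact (hC t ht).2.1
    · intro l
      rcases hcval l with h | ⟨t, ht, hh⟩
      · rw [h]; exact fun hadj => hxz hadj.symm
      · rw [hh]; exact (hC t ht).2.2.1
    · intro l l'
      rcases hcval l with h | ⟨t, ht, hh⟩ <;> rcases hcval l' with h' | ⟨t', ht', hh'⟩
      · rw [h, h']; exact G.loopless.irrefl x
      · rw [h, hh']; exact hA t' ((hC t' ht').1.1) ((hC t' ht').1.2)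
      · rw [hh, h']
        exact fun hadj => hA t ((hC t ht).1.1) ((hC t ht).1.2) hadj.symm
      · rw [hh, hh']
        by_cases htt : t = t'
        · subst htt; exact G.loopless.irrefl _
        · rcases Nat.lt_or_ge t t' with hlt | hge
          · exact hB t t' ((hC t ht).1.1) ((hC t' ht').1.1) hlt ((hC t' ht').1.2)
          · exact fun hadj =>
              hB t' t ((hC t' ht').1.1) ((hC t ht).1.1) (by omega) ((hC t ht).1.2) hadj.symm
  -- counting principle with x an endpoint of the edge
  have HF2 : ∀ z : V, G.Adj x z →
      ∀ C : Finset ℕ,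
        (∀ t ∈ C, (t ∈ J ∧ t < m) ∧ ¬ G.Adj z (p (t + 1)) ∧ z ≠ p (t + 1)) →
        k ≤ C.card → False := by
    intro z hxz C hC hcard'
    obtain ⟨F, hFC, hFcard⟩ := Finset.exists_subset_card_eq hcard'
    have e := F.orderIsoOfFin hFcard
    set f : ℕ → ℕ := fun n => if h : n < k then ((e ⟨n, h⟩ : F) : ℕ) else 0 with hf
    have hfC : ∀ n, n < k → f n ∈ C := by
      intro n hn
      simp only [hf]
      rw [dif_pos hn]
      exact hFC (e ⟨n, hn⟩).2
    have hfJ : ∀ n, n < k → f n ∈ J ∧ f n < m := fun n hn => (hC _ (hfC n hn)).1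
    have hfinj : ∀ n n', n < k → n' < k → f n = f n' → n = n' := by
      intro n n' hn hn' hff
      simp only [hf] at hff
      rw [dif_pos hn, dif_pos hn'] at hff
      have h2 := e.injective (Subtype.coe_injective hff)
      exact congrArg Fin.val h2
    set c : Fin k → V := fun l => p (f (l : ℕ) + 1) with hc
    have hcval : ∀ l : Fin k, f (l : ℕ) ∈ C ∧ c l = p (f (l : ℕ) + 1) := by
      intro l
      exact ⟨hfC _ l.isLt, rfl⟩
    have hcinj : Function.Injective c := by
      intro l l' hll
      simp only [hc] at hll
      have hb1 := (hfJ (l : ℕ) l.isLt).2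
      have hb2 := (hfJ (l' : ℕ) l'.isLt).2
      have h3 := pinj _ _ (by omega) (by omega) hll
      have h4 := hfinj (l : ℕ) (l' : ℕ) l.isLt l'.isLt (by omega)
      exact Fin.ext h4
    refine hfree ⟨x, z, c, hcinj, G.ne_of_adj hxz, ?_, ?_, hxz, ?_, ?_, ?_⟩
    · intro l
      obtain ⟨ht, hh⟩ := hcval l
      rw [hh]
      exact (xne _ (by have := (hC _ ht).1.2; omega)).symm
    · intro l
      obtain ⟨ht, hh⟩ := hcval l
      rw [hh]
      exact (hC _ ht).2.2
    · intro l
      obtain ⟨ht, hh⟩ := hcval l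
      rw [hh]
      exact hA _ (hC _ ht).1.1 (hC _ ht).1.2
    · intro l
      obtain ⟨ht, hh⟩ := hcval l
      rw [hh]
      exact (hC _ ht).2.1
    · intro l l'
      obtain ⟨ht, hh⟩ := hcval l
      obtain ⟨ht', hh'⟩ := hcval l'
      rw [hh, hh']
      by_cases htt : f (l : ℕ) = f (l' : ℕ)
      · rw [htt]; exact G.loopless.irrefl _
      · rcases Nat.lt_or_ge (f (l : ℕ)) (f (l' : ℕ)) with hlt | hge
        · exact hB _ _ (hC _ ht).1.1 (hC _ ht').1.1 hlt (hC _ ht').1.2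
        · exact fun hadj =>
            hB _ _ (hC _ ht').1.1 (hC _ ht).1.1 (by omega) (hC _ ht).1.2 hadj.symm
  -- Tfin and its cardinality
  set Tfin : Finset ℕ := (Finset.range m).filter (· ∈ J) with hTfin
  have hTmem : ∀ r : ℕ, r ∈ Tfin ↔ (r < m ∧ r ∈ J) := by
    intro r; simp [hTfin]
  have hTsub : Jfin ⊆ insert m Tfin := by
    intro t ht
    rw [hJfin_mem] at ht
    rcases Nat.lt_or_ge t m with h | h
    · exact Finset.mem_insert_of_mem ((hTmem t).mpr ⟨h, ht.2⟩)
    · have : t = m := by omega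
      rw [this]; exact Finset.mem_insert_self _ _
  have hdT : 2 * k ≤ Tfin.card + 1 := by
    have h1 := Finset.card_le_card hTsub
    have h2 := Finset.card_insert_le m Tfin
    omega
  -- the key claim, by strong induction on j
  have key : ∀ j : ℕ, Odd j → 1 ≤ j → j ≤ s → ∀ i, i ∈ J → i < m →
      ¬ G.Adj (p (s - j)) (p (i + 1)) := by
    intro j
    induction j using Nat.strong_induction_on with
    | _ j IH =>
      intro hodd h1 hjs i hiJ him hadj
      have hsi : s ≤ i := hs ▸ Nat.sInf_le hiJ
      have hsJ : s ∈ J := hs ▸ Nat.sInf_mem ⟨i, hiJ⟩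
      have hsm : s < m := by omega
      have hxs : G.Adj x (p s) := ((hJmem s).mp hsJ).2
      have hnxy : ¬ G.Adj x (p (s - j)) := hnotJ _ (by omega) (by omega)
      have hnxz : ¬ G.Adj x (p (i + 1)) := hA i hiJ him
      have hyx : p (s - j) ≠ x := xne _ (by omega)
      have hzx : p (i + 1) ≠ x := xne _ (by omega)
      -- dispose of k = 1
      rcases Nat.lt_or_ge k 2 with hk1 | hk2
      · exact HF1 _ _ hadj hnxy hnxz hyx hzx ∅ (by simp) (by simp; omega)
      -- the chord sets of p (s - j)
      set αfin : Finset ℕ := Tfin.filter (fun t => G.Adj (p (s - j)) (p (t + 1))) with hα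
      set C1 : Finset ℕ := Tfin.filter (fun t => ¬ G.Adj (p (s - j)) (p (t + 1))) with hC1def
      have hiT : i ∈ Tfin := (hTmem i).mpr ⟨him, hiJ⟩
      have hiα : i ∈ αfin := by rw [hα, Finset.mem_filter]; exact ⟨hiT, hadj⟩
      have hsT : s ∈ Tfin := (hTmem s).mpr ⟨hsm, hsJ⟩
      have hC1card : C1.card ≤ k - 2 := by
        by_contra hcc
        refine HF1 (p (s - j)) (p (i + 1)) hadj hnxy hnxz hyx hzx C1 ?_ (by omega)
        intro t ht
        rw [hC1def, Finset.mem_filter, hTmem] at ht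
        obtain ⟨⟨htm, htJ⟩, hnadj⟩ := ht
        have hst : s ≤ t := hs ▸ Nat.sInf_le htJ
        have hti : t ≠ i := by rintro rfl; exact hnadj hadj
        refine ⟨⟨htJ, htm⟩, hnadj, ?_, pne _ _ (by omega) (by omega) (by omega),
          pne _ _ (by omega) (by omega) (by omega)⟩
        rcases Nat.lt_or_ge t i with hlt | hge
        · exact fun hadj2 => hB t i htJ hiJ hlt him hadj2.symm
        · exact hB i t hiJ htJ (by omega) htm
      have hsplit1 : αfin.card + C1.card = Tfin.card := by
        rw [hα, hC1def]
        exact Finset.card_filter_add_card_filter_not _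
      -- the chord sets of p (s - j + 1)
      set Es : Finset ℕ := Tfin.erase s with hEs
      set βfin : Finset ℕ := Es.filter (fun t => G.Adj (p (s - j + 1)) (p (t + 1))) with hβ
      set Cβ : Finset ℕ := Es.filter (fun t => ¬ G.Adj (p (s - j + 1)) (p (t + 1))) with hCβdef
      have hEsmem : ∀ t : ℕ, t ∈ Es ↔ (t ≠ s ∧ t < m ∧ t ∈ J) := by
        intro t
        rw [hEs, Finset.mem_erase, hTmem]
      have hCβcard : Cβ.card ≤ k - 1 := by
        rcases (show j = 1 ∨ 3 ≤ j by obtain ⟨cc, hcc⟩ := hodd; omega) with hj1 | hj3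
        · by_contra hcc
          refine HF2 (p (s - j + 1)) (by
            have hss : s - j + 1 = s := by omega
            rw [hss]; exact hxs) Cβ ?_ (by omega)
          intro t ht
          rw [hCβdef, Finset.mem_filter, hEsmem] at ht
          obtain ⟨⟨hts, htm, htJ⟩, hnadj⟩ := ht
          have hst : s ≤ t := hs ▸ Nat.sInf_le htJ
          exact ⟨⟨htJ, htm⟩, hnadj, pne _ _ (by omega) (by omega) (by omega)⟩
        · by_contra hcc
          have hodd' : Odd (j - 2) := by
            obtain ⟨cc, hcc⟩ := hodd
            exact ⟨cc - 1, by omega⟩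
          have hIH := IH (j - 2) (by omega) hodd' (by omega) (by omega)
          have hrw : s - (j - 2) = s - j + 2 := by omega
          refine HF1 (p (s - j + 1)) (p (s - j + 2)) (padd _ _ (by omega) (by omega))
            (hnotJ _ (by omega) (by omega)) (hnotJ _ (by omega) (by omega))
            (xne _ (by omega)) (xne _ (by omega)) Cβ ?_ (by omega)
          intro t ht
          rw [hCβdef, Finset.mem_filter, hEsmem] at ht
          obtain ⟨⟨hts, htm, htJ⟩, hnadj⟩ := ht
          have hst : s ≤ t := hs ▸ Nat.sInf_le htJ
          refine ⟨⟨htJ, htm⟩, hnadj, ?_, pne _ _ (by omega) (by omega) (by omega),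
            pne _ _ (by omega) (by omega) (by omega)⟩
          have hIHt := hIH t htJ htm
          rwa [hrw] at hIHt
      have hEscard : Es.card = Tfin.card - 1 := by
        rw [hEs]; exact Finset.card_erase_of_mem hsT
      have hsplit2 : βfin.card + Cβ.card = Es.card := by
        rw [hβ, hCβdef]
        exact Finset.card_filter_add_card_filter_not _
      -- R3 rules out β-chords beyond the minimum of α
      have hαne : αfin.Nonempty := ⟨i, hiα⟩
      set i₁ : ℕ := αfin.min' hαne with hi₁
      have hi₁α : i₁ ∈ αfin := Finset.min'_mem _ _
      have hi₁p := hi₁α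
      rw [hα, Finset.mem_filter, hTmem] at hi₁p
      obtain ⟨⟨hi₁m, hi₁J⟩, hi₁adj⟩ := hi₁p
      have hble : ∀ t ∈ βfin, t ≤ i₁ := by
        intro t ht
        by_contra hgt
        push_neg at hgt
        have htp := ht
        rw [hβ, Finset.mem_filter, hEsmem] at htp
        obtain ⟨⟨hts, htm, htJ⟩, hadjβ⟩ := htp
        exact hR3 j i₁ t h1 hjs hi₁J htJ hgt htm hi₁adj hadjβ
      -- final counting
      set Lo : Finset ℕ := Tfin.filter (fun t => t ≤ i₁) with hLo
      set Hi : Finset ℕ := Tfin.filter (fun t => ¬ t ≤ i₁) with hHi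
      have hLoHi : Lo.card + Hi.card = Tfin.card := by
        rw [hLo, hHi]; exact Finset.card_filter_add_card_filter_not _
      have hsLo : s ∈ Lo := by
        rw [hLo, Finset.mem_filter]
        exact ⟨hsT, hs ▸ Nat.sInf_le hi₁J⟩
      have hβLo : βfin ⊆ Lo.erase s := by
        intro t ht
        have htp := ht
        rw [hβ, Finset.mem_filter, hEsmem] at htp
        obtain ⟨⟨hts, htm, htJ⟩, _⟩ := htp
        rw [Finset.mem_erase, hLo, Finset.mem_filter, hTmem]
        exact ⟨hts, ⟨htm, htJ⟩, hble t ht⟩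
      have hβcard : βfin.card ≤ Lo.card - 1 := by
        have h1' := Finset.card_le_card hβLo
        rw [Finset.card_erase_of_mem hsLo] at h1'
        exact h1'
      have hαHi : αfin.erase i₁ ⊆ Hi := by
        intro t ht
        rw [Finset.mem_erase] at ht
        obtain ⟨htne, htα⟩ := ht
        have htmin := Finset.min'_le _ _ htα
        have htp := htα
        rw [hα, Finset.mem_filter] at htp
        rw [hHi, Finset.mem_filter]
        exact ⟨htp.1, by omega⟩
      have hαcard2 : αfin.card - 1 ≤ Hi.card := by
        have h1' := Finset.card_le_card hαHi
        rw [Finset.card_erase_of_mem hi₁α] at h1'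
        exact h1'
      have hα1 : 1 ≤ αfin.card := Finset.card_pos.mpr hαne
      have hLo1 : 1 ≤ Lo.card := Finset.card_pos.mpr ⟨s, hsLo⟩
      omega
  -- conclude
  intro j hodd h1 hjs w hw
  rw [hNplus] at hw
  obtain ⟨i, hiJ, him, rfl⟩ := hw
  exact key j hodd h1 hjs i hiJ him
end
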